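/- arXiv:1006.5520 — 9 statements merged into one kernel-verified Lean document; each statement's English description precedes it below -/
import Mathlib

section
/- Let μ be a directed distance on a finite set S and let P_μ = { p ∈ R^{S^c ∪ S^r} : p(s^c) + p(t^r) ≥ μ(s,t) for all s,t ∈ S }. For s,t ∈ S, let R_s denote the set of nonnegative points p ∈ P_μ with p(s^c) = p(s^r) = 0. Then for any p ∈ R_s and q ∈ R_t, one has D_∞(p,q) ≥ μ(s,t), where D_∞(p,q) = max( max_{u ∈ S^c} (q(u) - p(u))_+ , max_{v ∈ S^r} (p(v) - q(v))_+ ). -/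
open scoped BigOperators

/-- for `p ∈ R_s` and `q ∈ R_t` one has `D_∞(p,q) ≥ μ(s,t)`.
Points of `ℝ^{S^c ∪ S^r}` are modelled as `S ⊕ S → ℝ`, with `Sum.inl` the
column copy `S^c` and `Sum.inr` the row copy `S^r`. -/
theorem stmt_2 {S : Type*} [Fintype S] [Nonempty S]
    (μ : S → S → ℝ) (hμ0 : ∀ s t, 0 ≤ μ s t) (hμdiag : ∀ s, μ s s = 0)
    (s t : S) (p q : S ⊕ S → ℝ)
    (hp : ∀ u v : S, μ u v ≤ p (Sum.inl u) + p (Sum.inr v))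
    (hq : ∀ u v : S, μ u v ≤ q (Sum.inl u) + q (Sum.inr v))
    (hp0 : ∀ u : S ⊕ S, 0 ≤ p u) (hq0 : ∀ u : S ⊕ S, 0 ≤ q u)
    (hps : p (Sum.inl s) = 0 ∧ p (Sum.inr s) = 0)
    (hqt : q (Sum.inl t) = 0 ∧ q (Sum.inr t) = 0) :
    μ s t ≤ max (⨆ u : S, max (q (Sum.inl u) - p (Sum.inl u)) 0)
                (⨆ v : S, max (p (Sum.inr v) - q (Sum.inr v)) 0) := by
  have h1 : μ s t ≤ p (Sum.inr t) := by
    have := hp s t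
    rw [hps.1] at this
    linarith
  have h2 : μ s t ≤ max (p (Sum.inr t) - q (Sum.inr t)) 0 := by
    rw [hqt.2]
    exact le_max_of_le_left (by linarith)
  refine le_trans (h2.trans ?_) (le_max_right _ _)
  exact le_ciSup (f := fun v => max (p (Sum.inr v) - q (Sum.inr v)) 0) (Set.Finite.bddAbove (Set.finite_range _)) t
end

section
/- Let μ be a directed distance on the finite set S, let (G,S,c) be a directed network with integer capacities, and let R be any subset of the nonnegative part of P_μ such that for each s ∈ S the set R_s = { p ∈ R : p(s^c) = p(s^r) = 0 } is nonempty. Then the maximum μ-weighted multiflow value MFP*(μ;G,S,c) is at most the minimum over all maps ρ : VG → R with ρ(s) ∈ R_s for every s ∈ S of ∑_{xy ∈ EG} c(xy) D_∞(ρ(x),ρ(y)). (Weak duality between the multiflow problem and the facility location problem.) -/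
open scoped BigOperators

/-- Number of times the walk described by the vertex list `l` traverses the
directed edge `(x,y)`. -/
def edgeCount {V : Type*} [DecidableEq V] (l : List V) (x y : V) : ℕ :=
  (l.zip l.tail).count (x, y)

private lemma sum_count_mul {V : Type*} [Fintype V] [DecidableEq V]
    (L : List (V × V)) (f : V → V → ℝ) :
    ∑ x : V, ∑ y : V, (L.count (x, y) : ℝ) * f x y
      = (L.map (fun p => f p.1 p.2)).sum := by
  induction L with
  | nil => simp
  | cons a L ih =>
    simp only [List.count_cons, List.map_cons, List.sum_cons]
    push_cast
    simp only [beq_iff_eq]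
    have key : ∀ x y : V, ((L.count (x, y) : ℝ) + if a = (x, y) then 1 else 0) * f x y
        = (L.count (x, y) : ℝ) * f x y
          + (if a = (x, y) then f a.1 a.2 else 0) := by
      intro x y
      by_cases h : a = (x, y)
      · obtain rfl := h; simp; ring
      · simp [h]
    simp only [key, Finset.sum_add_distrib, ih]
    have : ∑ x : V, ∑ y : V, (if a = (x, y) then f a.1 a.2 else 0) = f a.1 a.2 := by
      rw [← Finset.sum_product']
      simp
    rw [this]; ring

private lemma telescope {V : Type*} (g : V → ℝ) :
    ∀ (l : List V) (a b : V), l.head? = some a → l.getLast? = some b →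
      ((l.zip l.tail).map (fun p => g p.2 - g p.1)).sum = g b - g a
  | [], a, b, h, _ => by simp at h
  | [x], a, b, ha, hb => by
      simp at ha hb
      subst ha; subst hb; simp
  | x :: y :: L, a, b, ha, hb => by
      simp only [List.head?_cons, Option.some.injEq] at ha
      subst ha
      have hb' : (y :: L).getLast? = some b := by
        rwa [List.getLast?_cons_cons] at hb
      have ih := telescope g (y :: L) y b rfl hb'
      simp only [List.tail_cons] at ih
      simp only [List.tail_cons, List.zip_cons_cons, List.map_cons, List.sum_cons]
      rw [ih]; ring

/-- weak duality: the value of any μ-weighted multiflow is at most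
the cost of any feasible facility-location map `ρ : VG → R ⊆ P_μ^+`.
The network is modelled by a capacity `c : V → V → ℕ` on the complete digraph
(c x y = 0 meaning no edge); a multiflow is a finite set of paths (vertex lists)
with flow values `lam`, each path joining distinct terminals. -/
theorem stmt_3 {V S : Type*} [Fintype V] [Fintype S] [DecidableEq V] [Nonempty S]
    (ι : S → V) (hι : Function.Injective ι)
    (μ : S → S → ℝ) (hμ0 : ∀ s t, 0 ≤ μ s t) (hμdiag : ∀ s, μ s s = 0)
    (c : V → V → ℕ)
    (R : Set (S ⊕ S → ℝ))
    (hR : ∀ p ∈ R, (∀ u, 0 ≤ p u) ∧ ∀ s t : S, μ s t ≤ p (Sum.inl s) + p (Sum.inr t))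
    (hRs : ∀ s : S, ∃ p ∈ R, p (Sum.inl s) = 0 ∧ p (Sum.inr s) = 0)
    -- the multiflow
    (paths : Finset (List V)) (lam : List V → ℝ)
    (hlam : ∀ P ∈ paths, 0 ≤ lam P)
    (src dst : List V → S)
    (hpath : ∀ P ∈ paths, P.head? = some (ι (src P)) ∧
      P.getLast? = some (ι (dst P)) ∧ src P ≠ dst P ∧ P.Chain' (fun x y => 0 < c x y))
    (hcap : ∀ x y : V, ∑ P ∈ paths, lam P * (edgeCount P x y : ℝ) ≤ (c x y : ℝ))
    -- the facility-location map
    (ρ : V → (S ⊕ S → ℝ)) (hρ : ∀ x, ρ x ∈ R)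
    (hρS : ∀ s : S, ρ (ι s) ∈ R ∧ ρ (ι s) (Sum.inl s) = 0 ∧ ρ (ι s) (Sum.inr s) = 0) :
    ∑ P ∈ paths, lam P * μ (src P) (dst P) ≤
      ∑ x : V, ∑ y : V, (c x y : ℝ) *
        max (⨆ u : S, max (ρ y (Sum.inl u) - ρ x (Sum.inl u)) 0)
            (⨆ v : S, max (ρ x (Sum.inr v) - ρ y (Sum.inr v)) 0) := by
  set D : V → V → ℝ := fun x y =>
    max (⨆ u : S, max (ρ y (Sum.inl u) - ρ x (Sum.inl u)) 0)
        (⨆ v : S, max (ρ x (Sum.inr v) - ρ y (Sum.inr v)) 0) with hDdef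
  have hDle : ∀ x y (u : S), ρ y (Sum.inl u) - ρ x (Sum.inl u) ≤ D x y := by
    intro x y u
    refine le_trans (le_max_left _ 0) (le_trans ?_ (le_max_left _ _))
    exact le_ciSup (f := fun u : S => max (ρ y (Sum.inl u) - ρ x (Sum.inl u)) 0)
      (Set.Finite.bddAbove (Set.finite_range _)) u
  have hD0 : ∀ x y, 0 ≤ D x y := by
    intro x y
    obtain ⟨u⟩ := ‹Nonempty S›
    refine le_trans (le_max_right (ρ y (Sum.inl u) - ρ x (Sum.inl u)) 0) ?_
    exact le_trans (le_ciSup (f := fun u : S => max (ρ y (Sum.inl u) - ρ x (Sum.inl u)) 0)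
      (Set.Finite.bddAbove (Set.finite_range _)) u) (le_max_left _ _)
  -- per path bound
  have hpathbd : ∀ P ∈ paths,
      μ (src P) (dst P) ≤ ((P.zip P.tail).map (fun p => D p.1 p.2)).sum := by
    intro P hP
    obtain ⟨hhead, hlast, -, -⟩ := hpath P hP
    set s := src P; set t := dst P
    have h1 : μ s t ≤ ρ (ι t) (Sum.inl s) := by
      have := (hR _ (hρ (ι t))).2 s t
      rwa [(hρS t).2.2, add_zero] at this
    have h2 : ρ (ι t) (Sum.inl s) - ρ (ι s) (Sum.inl s)
        = ((P.zip P.tail).map (fun p => ρ p.2 (Sum.inl s) - ρ p.1 (Sum.inl s))).sum :=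
      (telescope (fun v => ρ v (Sum.inl s)) P (ι s) (ι t) hhead hlast).symm
    have h3 : ((P.zip P.tail).map (fun p => ρ p.2 (Sum.inl s) - ρ p.1 (Sum.inl s))).sum
        ≤ ((P.zip P.tail).map (fun p => D p.1 p.2)).sum :=
      List.sum_le_sum (fun p _ => hDle p.1 p.2 s)
    calc μ s t ≤ ρ (ι t) (Sum.inl s) := h1
      _ = ρ (ι t) (Sum.inl s) - ρ (ι s) (Sum.inl s) := by rw [(hρS s).2.1, sub_zero]
      _ ≤ _ := h2 ▸ h3
  calc ∑ P ∈ paths, lam P * μ (src P) (dst P)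
      ≤ ∑ P ∈ paths, lam P * ((P.zip P.tail).map (fun p => D p.1 p.2)).sum :=
        Finset.sum_le_sum fun P hP =>
          mul_le_mul_of_nonneg_left (hpathbd P hP) (hlam P hP)
    _ = ∑ P ∈ paths, lam P * ∑ x : V, ∑ y : V, (edgeCount P x y : ℝ) * D x y := by
        refine Finset.sum_congr rfl fun P _ => ?_
        congr 1
        exact (sum_count_mul (P.zip P.tail) D).symm
    _ = ∑ x : V, ∑ y : V, D x y * ∑ P ∈ paths, lam P * (edgeCount P x y : ℝ) := by
        simp_rw [Finset.mul_sum]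
        rw [Finset.sum_comm]
        refine Finset.sum_congr rfl fun x _ => ?_
        rw [Finset.sum_comm]
        refine Finset.sum_congr rfl fun y _ => ?_
        refine Finset.sum_congr rfl fun P _ => ?_
        ring
    _ ≤ ∑ x : V, ∑ y : V, D x y * (c x y : ℝ) := by
        refine Finset.sum_le_sum fun x _ => Finset.sum_le_sum fun y _ =>
          mul_le_mul_of_nonneg_left (hcap x y) (hD0 x y)
    _ = _ := by
        refine Finset.sum_congr rfl fun x _ => Finset.sum_congr rfl fun y _ => ?_
        rw [mul_comm]
end

section
/- Let μ be a directed metric on a finite set S and for p ∈ R^{S^c ∪ S^r} let Q_μ denote the set of minimal elements (with respect to the coordinatewise order) of P_μ = { p : p(s^c)+p(t^r) ≥ μ(s,t) for all s,t ∈ S }. Then for every p, q ∈ Q_μ one has D_∞^+(p^c, q^c) = D_∞^+(q^r, p^r), where p^c and p^r denote the restrictions of p to S^c and S^r respectively and D_∞^+(a,b) = max_x (b(x)-a(x))_+. -/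
open scoped BigOperators

open Classical in
/-- c-tightness from minimality -/
lemma tight_c {S : Type*} [Fintype S] [Nonempty S]
    (μ : S → S → ℝ) (p : S ⊕ S → ℝ)
    (hp : ∀ s t : S, μ s t ≤ p (Sum.inl s) + p (Sum.inr t))
    (hpmin : ¬ ∃ p' : S ⊕ S → ℝ,
      (∀ s t : S, μ s t ≤ p' (Sum.inl s) + p' (Sum.inr t)) ∧ p' ≤ p ∧ p' ≠ p)
    (u : S) : ∃ t : S, p (Sum.inl u) + p (Sum.inr t) = μ u t := by
  by_contra h
  push_neg at h
  obtain ⟨t0, -, ht0⟩ := Finset.exists_min_image Finset.univ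
    (fun t => p (Sum.inl u) + p (Sum.inr t) - μ u t) ⟨Classical.arbitrary S, Finset.mem_univ _⟩
  set ε := p (Sum.inl u) + p (Sum.inr t0) - μ u t0 with hε
  have hεpos : 0 < ε := by
    have := hp u t0
    have := h t0
    have : μ u t0 < p (Sum.inl u) + p (Sum.inr t0) := lt_of_le_of_ne (hp u t0) (fun hc => h t0 hc.symm)
    linarith
  apply hpmin
  refine ⟨Function.update p (Sum.inl u) (p (Sum.inl u) - ε), ?_, ?_, ?_⟩
  · intro s t
    have hr : Function.update p (Sum.inl u) (p (Sum.inl u) - ε) (Sum.inr t) = p (Sum.inr t) := by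
      apply Function.update_of_ne; simp
    rw [hr]
    by_cases hs : s = u
    · subst hs
      rw [Function.update_self]
      have := ht0 t (Finset.mem_univ _)
      linarith
    · rw [Function.update_of_ne (by simpa using hs)]
      exact hp s t
  · intro x
    by_cases hx : x = Sum.inl u
    · subst hx; rw [Function.update_self]; linarith
    · rw [Function.update_of_ne hx]
  · intro hc
    have := congrFun hc (Sum.inl u)
    rw [Function.update_self] at this
    linarith

open Classical in
/-- r-tightness from minimality -/
lemma tight_r {S : Type*} [Fintype S] [Nonempty S]
    (μ : S → S → ℝ) (p : S ⊕ S → ℝ)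
    (hp : ∀ s t : S, μ s t ≤ p (Sum.inl s) + p (Sum.inr t))
    (hpmin : ¬ ∃ p' : S ⊕ S → ℝ,
      (∀ s t : S, μ s t ≤ p' (Sum.inl s) + p' (Sum.inr t)) ∧ p' ≤ p ∧ p' ≠ p)
    (v : S) : ∃ s : S, p (Sum.inl s) + p (Sum.inr v) = μ s v := by
  by_contra h
  push_neg at h
  obtain ⟨s0, -, hs0⟩ := Finset.exists_min_image Finset.univ
    (fun s => p (Sum.inl s) + p (Sum.inr v) - μ s v) ⟨Classical.arbitrary S, Finset.mem_univ _⟩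
  set ε := p (Sum.inl s0) + p (Sum.inr v) - μ s0 v with hε
  have hεpos : 0 < ε := by
    have : μ s0 v < p (Sum.inl s0) + p (Sum.inr v) := lt_of_le_of_ne (hp s0 v) (fun hc => h s0 hc.symm)
    linarith
  apply hpmin
  refine ⟨Function.update p (Sum.inr v) (p (Sum.inr v) - ε), ?_, ?_, ?_⟩
  · intro s t
    have hl : Function.update p (Sum.inr v) (p (Sum.inr v) - ε) (Sum.inl s) = p (Sum.inl s) := by
      apply Function.update_of_ne; simp
    rw [hl]
    by_cases ht : t = v
    · subst ht
      rw [Function.update_self]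
      have := hs0 s (Finset.mem_univ _)
      linarith
    · rw [Function.update_of_ne (by simpa using ht)]
      exact hp s t
  · intro x
    by_cases hx : x = Sum.inr v
    · subst hx; rw [Function.update_self]; linarith
    · rw [Function.update_of_ne hx]
  · intro hc
    have := congrFun hc (Sum.inr v)
    rw [Function.update_self] at this
    linarith

lemma key_le {S : Type*} [Fintype S] [Nonempty S]
    (μ : S → S → ℝ) (p q : S ⊕ S → ℝ)
    (hp : ∀ s t : S, μ s t ≤ p (Sum.inl s) + p (Sum.inr t))
    (hqt : ∀ u : S, ∃ t : S, q (Sum.inl u) + q (Sum.inr t) = μ u t) :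
    (⨆ u : S, max (q (Sum.inl u) - p (Sum.inl u)) 0)
      ≤ (⨆ v : S, max (p (Sum.inr v) - q (Sum.inr v)) 0) := by
  apply ciSup_le
  intro u
  obtain ⟨t, ht⟩ := hqt u
  have h1 : max (q (Sum.inl u) - p (Sum.inl u)) 0
      ≤ max (p (Sum.inr t) - q (Sum.inr t)) 0 := by
    apply max_le_max _ le_rfl
    have := hp u t
    linarith
  exact h1.trans (le_ciSup (f := fun v : S => max (p (Sum.inr v) - q (Sum.inr v)) 0)
    (Set.Finite.bddAbove (Set.finite_range _)) t)

/-- for minimal points `p, q` of `P_μ` one has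
`D_∞^+(p^c,q^c) = D_∞^+(q^r,p^r)`. -/
theorem stmt_5 {S : Type*} [Fintype S] [Nonempty S]
    (μ : S → S → ℝ) (hμ0 : ∀ s t, 0 ≤ μ s t) (hμdiag : ∀ s, μ s s = 0)
    (hμtri : ∀ s t u, μ s u ≤ μ s t + μ t u)
    (p q : S ⊕ S → ℝ)
    (hp : ∀ s t : S, μ s t ≤ p (Sum.inl s) + p (Sum.inr t))
    (hq : ∀ s t : S, μ s t ≤ q (Sum.inl s) + q (Sum.inr t))
    (hpmin : ¬ ∃ p' : S ⊕ S → ℝ,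
      (∀ s t : S, μ s t ≤ p' (Sum.inl s) + p' (Sum.inr t)) ∧ p' ≤ p ∧ p' ≠ p)
    (hqmin : ¬ ∃ q' : S ⊕ S → ℝ,
      (∀ s t : S, μ s t ≤ q' (Sum.inl s) + q' (Sum.inr t)) ∧ q' ≤ q ∧ q' ≠ q) :
    (⨆ u : S, max (q (Sum.inl u) - p (Sum.inl u)) 0)
      = (⨆ v : S, max (p (Sum.inr v) - q (Sum.inr v)) 0) := by
  apply le_antisymm
  · exact key_le μ p q hp (tight_c μ q hq hqmin)
  · -- apply key_le with transposed metric and swapped copies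
    have := key_le (fun s t => μ t s) (fun x => q x.swap) (fun x => p x.swap)
      (fun s t => by simpa [add_comm] using hq t s)
      (fun u => by
        obtain ⟨s, hs⟩ := tight_r μ p hp hpmin u
        exact ⟨s, by simpa [add_comm] using hs⟩)
    simpa using this
end

section
/- Let μ be a directed distance on a finite set S. A nonnegative point p ∈ P_μ belongs to the directed tight span T_μ (the set of minimal elements of the nonnegative part of P_μ) if and only if the bipartite graph K(p) on S^c ∪ S^r with edges { s^c t^r : p(s^c) + p(t^r) = μ(s,t) } has no isolated node u with p(u) > 0. -/
/-- a nonnegative point `p ∈ P_μ^+` belongs to the directed tight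
span `T_μ` (minimal elements of `P_μ^+`) iff the graph `K(p)` has no isolated
node `u` with `p(u) > 0`. -/
theorem stmt_6 {S : Type*} [Fintype S]
    (μ : S → S → ℝ) (hμ0 : ∀ s t, 0 ≤ μ s t) (hμdiag : ∀ s, μ s s = 0)
    (p : S ⊕ S → ℝ) (hp0 : ∀ u, 0 ≤ p u)
    (hp : ∀ s t : S, μ s t ≤ p (Sum.inl s) + p (Sum.inr t)) :
    (¬ ∃ q : S ⊕ S → ℝ, (∀ u, 0 ≤ q u) ∧
        (∀ s t : S, μ s t ≤ q (Sum.inl s) + q (Sum.inr t)) ∧ q ≤ p ∧ q ≠ p)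
      ↔ ((∀ s : S, 0 < p (Sum.inl s) →
            ∃ t : S, p (Sum.inl s) + p (Sum.inr t) = μ s t) ∧
         (∀ t : S, 0 < p (Sum.inr t) →
            ∃ s : S, p (Sum.inl s) + p (Sum.inr t) = μ s t)) := by
  classical
  constructor
  · intro hmin
    constructor
    · intro s hs
      by_contra hno
      push_neg at hno
      have hstrict : ∀ t, μ s t < p (Sum.inl s) + p (Sum.inr t) :=
        fun t => lt_of_le_of_ne (hp s t) (fun h => hno t h.symm)
      obtain ⟨t0, _, ht0⟩ := Finset.exists_min_image Finset.univ
        (fun t => p (Sum.inl s) + p (Sum.inr t) - μ s t) ⟨s, Finset.mem_univ s⟩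
      set ε := min (p (Sum.inl s)) (p (Sum.inl s) + p (Sum.inr t0) - μ s t0) with hε
      have hεpos : 0 < ε := lt_min hs (by linarith [hstrict t0])
      have hεle : ∀ t, ε ≤ p (Sum.inl s) + p (Sum.inr t) - μ s t :=
        fun t => le_trans (min_le_right _ _) (ht0 t (Finset.mem_univ t))
      refine hmin ⟨Function.update p (Sum.inl s) (p (Sum.inl s) - ε), ?_, ?_, ?_, ?_⟩
      · intro u
        by_cases hu : u = Sum.inl s
        · subst hu; rw [Function.update_self]
          have := min_le_left (p (Sum.inl s)) (p (Sum.inl s) + p (Sum.inr t0) - μ s t0)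
          linarith
        · rw [Function.update_of_ne hu]; exact hp0 u
      · intro s' t
        by_cases hs' : (Sum.inl s' : S ⊕ S) = Sum.inl s
        · have : s' = s := by injection hs'
          subst this
          rw [Function.update_self, Function.update_of_ne (by simp)]
          linarith [hεle t]
        · rw [Function.update_of_ne hs', Function.update_of_ne (by simp)]
          exact hp s' t
      · intro u
        by_cases hu : u = Sum.inl s
        · subst hu; rw [Function.update_self]; linarith
        · rw [Function.update_of_ne hu]
      · intro h
        have := congrFun h (Sum.inl s)
        rw [Function.update_self] at this
        linarith
    · intro t ht
      by_contra hno
      push_neg at hno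
      have hstrict : ∀ s, μ s t < p (Sum.inl s) + p (Sum.inr t) :=
        fun s => lt_of_le_of_ne (hp s t) (fun h => hno s h.symm)
      obtain ⟨s0, _, hs0⟩ := Finset.exists_min_image Finset.univ
        (fun s => p (Sum.inl s) + p (Sum.inr t) - μ s t) ⟨t, Finset.mem_univ t⟩
      set ε := min (p (Sum.inr t)) (p (Sum.inl s0) + p (Sum.inr t) - μ s0 t) with hε
      have hεpos : 0 < ε := lt_min ht (by linarith [hstrict s0])
      have hεle : ∀ s, ε ≤ p (Sum.inl s) + p (Sum.inr t) - μ s t :=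
        fun s => le_trans (min_le_right _ _) (hs0 s (Finset.mem_univ s))
      refine hmin ⟨Function.update p (Sum.inr t) (p (Sum.inr t) - ε), ?_, ?_, ?_, ?_⟩
      · intro u
        by_cases hu : u = Sum.inr t
        · subst hu; rw [Function.update_self]
          have := min_le_left (p (Sum.inr t)) (p (Sum.inl s0) + p (Sum.inr t) - μ s0 t)
          linarith
        · rw [Function.update_of_ne hu]; exact hp0 u
      · intro s t'
        by_cases ht' : (Sum.inr t' : S ⊕ S) = Sum.inr t
        · have : t' = t := by injection ht'
          subst this
          rw [Function.update_self, Function.update_of_ne (by simp)]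
          linarith [hεle s]
        · rw [Function.update_of_ne ht', Function.update_of_ne (by simp)]
          exact hp s t'
      · intro u
        by_cases hu : u = Sum.inr t
        · subst hu; rw [Function.update_self]; linarith
        · rw [Function.update_of_ne hu]
      · intro h
        have := congrFun h (Sum.inr t)
        rw [Function.update_self] at this
        linarith
  · rintro ⟨htl, htr⟩ ⟨q, hq0, hq, hqle, hqne⟩
    apply hqne
    funext u
    by_contra hu
    have hlt : q u < p u := lt_of_le_of_ne (hqle u) hu
    cases u with
    | inl s =>
      have hps : 0 < p (Sum.inl s) := lt_of_le_of_lt (hq0 _) hlt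
      obtain ⟨t, htt⟩ := htl s hps
      have := hq s t
      have := hqle (Sum.inr t)
      linarith
    | inr t =>
      have hpt : 0 < p (Sum.inr t) := lt_of_le_of_lt (hq0 _) hlt
      obtain ⟨s, hss⟩ := htr t hpt
      have := hq s t
      have := hqle (Sum.inl s)
      linarith
end

section
/- Let μ be a directed distance on a finite set S. A point p ∈ P_μ belongs to Q_μ (the set of minimal elements of P_μ) if and only if the bipartite graph K(p) on S^c ∪ S^r with edge set { s^c t^r : p(s^c) + p(t^r) = μ(s,t) } has no isolated node. -/
/-- a point `p ∈ P_μ` belongs to `Q_μ` (minimal elements of `P_μ`)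
iff the bipartite graph `K(p)` has no isolated node. -/
theorem stmt_7 {S : Type*} [Fintype S]
    (μ : S → S → ℝ) (hμ0 : ∀ s t, 0 ≤ μ s t) (hμdiag : ∀ s, μ s s = 0)
    (p : S ⊕ S → ℝ)
    (hp : ∀ s t : S, μ s t ≤ p (Sum.inl s) + p (Sum.inr t)) :
    (¬ ∃ q : S ⊕ S → ℝ,
        (∀ s t : S, μ s t ≤ q (Sum.inl s) + q (Sum.inr t)) ∧ q ≤ p ∧ q ≠ p)
      ↔ ((∀ s : S, ∃ t : S, p (Sum.inl s) + p (Sum.inr t) = μ s t) ∧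
         (∀ t : S, ∃ s : S, p (Sum.inl s) + p (Sum.inr t) = μ s t)) := by
  classical
  constructor
  · intro hmin
    constructor
    · intro s
      by_contra h
      push_neg at h
      have hne : (Finset.univ : Finset S).Nonempty := ⟨s, Finset.mem_univ s⟩
      set ε := Finset.univ.inf' hne (fun t => p (Sum.inl s) + p (Sum.inr t) - μ s t) with hε
      have hεpos : 0 < ε := by
        refine (Finset.lt_inf'_iff hne).mpr ?_
        intro t _
        have := h t
        have := hp s t
        linarith [lt_of_le_of_ne (hp s t) (Ne.symm (h t))]
      have hεle : ∀ t : S, ε ≤ p (Sum.inl s) + p (Sum.inr t) - μ s t := by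
        intro t
        exact Finset.inf'_le _ (Finset.mem_univ t)
      apply hmin
      refine ⟨Function.update p (Sum.inl s) (p (Sum.inl s) - ε), ?_, ?_, ?_⟩
      · intro s' t
        rcases eq_or_ne s' s with rfl | hs
        · rw [Function.update_self, Function.update_of_ne (by simp)]
          linarith [hεle t]
        · rw [Function.update_of_ne (fun hh => hs (Sum.inl.inj hh)), Function.update_of_ne (by simp)]
          exact hp s' t
      · intro x
        rcases eq_or_ne x (Sum.inl s) with rfl | hx
        · rw [Function.update_self]; linarith
        · rw [Function.update_of_ne hx]
      · intro hq
        have := congrFun hq (Sum.inl s)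
        rw [Function.update_self] at this
        linarith
    · intro t
      by_contra h
      push_neg at h
      have hne : (Finset.univ : Finset S).Nonempty := ⟨t, Finset.mem_univ t⟩
      set ε := Finset.univ.inf' hne (fun s => p (Sum.inl s) + p (Sum.inr t) - μ s t) with hε
      have hεpos : 0 < ε := by
        refine (Finset.lt_inf'_iff hne).mpr ?_
        intro s _
        linarith [lt_of_le_of_ne (hp s t) (Ne.symm (h s))]
      have hεle : ∀ s : S, ε ≤ p (Sum.inl s) + p (Sum.inr t) - μ s t := by
        intro s
        exact Finset.inf'_le _ (Finset.mem_univ s)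
      apply hmin
      refine ⟨Function.update p (Sum.inr t) (p (Sum.inr t) - ε), ?_, ?_, ?_⟩
      · intro s t'
        rcases eq_or_ne t' t with rfl | ht
        · rw [Function.update_self, Function.update_of_ne (by simp)]
          linarith [hεle s]
        · rw [Function.update_of_ne (fun hh => ht (Sum.inr.inj hh)), Function.update_of_ne (by simp)]
          exact hp s t'
      · intro x
        rcases eq_or_ne x (Sum.inr t) with rfl | hx
        · rw [Function.update_self]; linarith
        · rw [Function.update_of_ne hx]
      · intro hq
        have := congrFun hq (Sum.inr t)
        rw [Function.update_self] at this
        linarith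
  · rintro ⟨h1, h2⟩ ⟨q, hq, hle, hne⟩
    obtain ⟨x, hx⟩ := Function.ne_iff.mp hne
    have hxlt : q x < p x := lt_of_le_of_ne (hle x) hx
    cases x with
    | inl s =>
      obtain ⟨t, ht⟩ := h1 s
      have := hq s t
      have := hle (Sum.inr t)
      linarith
    | inr t =>
      obtain ⟨s, hs⟩ := h2 t
      have := hq s t
      have := hle (Sum.inl s)
      linarith
end

section
/- Let μ be a directed distance on a finite set S that can be written as μ = ∑_{(A,B) ∈ 𝒜} α(A,B) δ_{A,B} for a laminar family 𝒜 of partial cuts on S and positive weights α. Then μ has an oriented-tree realization: there exist an oriented tree Γ, a nonnegative edge length α' on EΓ, and a family {F_s}_{s∈S} of subtrees of Γ such that μ(s,t) = D_{Γ,α'}(F_s,F_t) := min_{u ∈ VF_s, v ∈ VF_t} D_{Γ,α'}(u,v) for all s,t. -/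
open scoped BigOperators

/-- two partial cuts are laminar. -/
def LaminarPair {S : Type*} (P Q : Set S × Set S) : Prop :=
  (P.1 ⊆ Q.1 ∧ Q.2 ⊆ P.2) ∨ (P.1 ⊆ Q.2 ∧ Q.1 ⊆ P.2) ∨
  (Q.1 ⊆ P.1 ∧ P.2 ⊆ Q.2) ∨ (Q.2 ⊆ P.1 ∧ P.2 ⊆ Q.1)

namespace Stmt15Aux

lemma bool_eq_not_of_ne {x y : Bool} (h : x ≠ y) : x = !y := by
  cases x <;> cases y <;> simp_all

variable {S : Type*}

def cle (P Q : Set S × Set S) : Prop := P.1 ⊆ Q.1 ∧ Q.2 ⊆ P.2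

def crev (P : Set S × Set S) : Set S × Set S := (P.2, P.1)

lemma cle_refl (P : Set S × Set S) : cle P P := ⟨le_refl _, le_refl _⟩

lemma cle_trans {P Q R : Set S × Set S} (h1 : cle P Q) (h2 : cle Q R) : cle P R :=
  ⟨h1.1.trans h2.1, h2.2.trans h1.2⟩

lemma cle_antisymm {P Q : Set S × Set S} (h1 : cle P Q) (h2 : cle Q P) : P = Q :=
  Prod.ext (subset_antisymm h1.1 h2.1) (subset_antisymm h2.2 h1.2)

@[simp] lemma crev_crev (P : Set S × Set S) : crev (crev P) = P := rfl

lemma crev_inj {P Q : Set S × Set S} (h : crev P = crev Q) : P = Q := by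
  have := congrArg crev h; simpa using this

lemma cle_crev_symm {P Q : Set S × Set S} : cle P (crev Q) ↔ cle Q (crev P) := by
  constructor <;> exact fun h => ⟨h.2, h.1⟩

lemma cle_crev_symm' {P Q : Set S × Set S} : cle (crev P) Q ↔ cle (crev Q) P := by
  constructor <;> exact fun h => ⟨h.2, h.1⟩

lemma cle_crev_crev {P Q : Set S × Set S} : cle (crev Q) (crev P) ↔ cle P Q := by
  constructor <;> exact fun h => ⟨h.2, h.1⟩

def PairOK (P Q : Set S × Set S) (a b : Bool) : Prop :=
  (cle P Q → ¬(a = true ∧ b = false)) ∧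
  (cle Q P → ¬(b = true ∧ a = false)) ∧
  (cle P (crev Q) → ¬(a = true ∧ b = true)) ∧
  (cle (crev Q) P ∧ ¬ cle P (crev Q) → ¬(a = false ∧ b = false))

lemma pairOK_symm {P Q : Set S × Set S} {a b : Bool} (h : PairOK P Q a b) :
    PairOK Q P b a := by
  obtain ⟨h1, h2, h3, h4⟩ := h
  refine ⟨h2, h1, ?_, ?_⟩
  · intro hc hab
    exact h3 (cle_crev_symm.mp hc) ⟨hab.2, hab.1⟩
  · intro hc hab
    exact h4 ⟨cle_crev_symm'.mp hc.1, fun hx => hc.2 (cle_crev_symm.mp hx)⟩ ⟨hab.2, hab.1⟩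

section Family

variable {ι : Type*} (E : ι → Set S × Set S)

def Cons (σ : ι → Bool) : Prop := ∀ i j, i ≠ j → PairOK (E i) (E j) (σ i) (σ j)

variable {E}

lemma no_four (hl : ∀ i j, LaminarPair (E i) (E j)) (i j : ι) :
    ¬ (PairOK (E i) (E j) true true ∧ PairOK (E i) (E j) true false ∧
       PairOK (E i) (E j) false true ∧ PairOK (E i) (E j) false false) := by
  rintro ⟨hTT, hTF, hFT, hFF⟩
  rcases hl i j with h | h | h | h
  · exact hTF.1 h ⟨rfl, rfl⟩
  · exact hTT.2.2.1 h ⟨rfl, rfl⟩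
  · exact hFT.2.1 h ⟨rfl, rfl⟩
  · by_cases hc : cle (E i) (crev (E j))
    · exact hTT.2.2.1 hc ⟨rfl, rfl⟩
    · exact hFF.2.2.2 ⟨h, hc⟩ ⟨rfl, rfl⟩

open Classical in
/-- override an assignment by the constraints of a point `s`. -/
noncomputable def ovr (E : ι → Set S × Set S) (s : S) (σ : ι → Bool) : ι → Bool :=
  fun i => if s ∈ (E i).1 then true else if s ∈ (E i).2 then false else σ i

lemma ovr_mem1 {E : ι → Set S × Set S} {s : S} {σ : ι → Bool} {i : ι}
    (h : s ∈ (E i).1) : ovr E s σ i = true := by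
  simp [ovr, h]

lemma ovr_mem2 {E : ι → Set S × Set S} {s : S} {σ : ι → Bool} {i : ι}
    (h1 : s ∉ (E i).1) (h2 : s ∈ (E i).2) : ovr E s σ i = false := by
  simp [ovr, h1, h2]

lemma ovr_not {E : ι → Set S × Set S} {s : S} {σ : ι → Bool} {i : ι}
    (h1 : s ∉ (E i).1) (h2 : s ∉ (E i).2) : ovr E s σ i = σ i := by
  simp [ovr, h1, h2]

/-- overriding a consistent assignment by the constraints of `s` stays consistent. -/
lemma cons_override (hd : ∀ i, Disjoint (E i).1 (E i).2) {σ : ι → Bool}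
    (hσ : Cons E σ) (s : S) :
    Cons E (ovr E s σ) := by
  intro i j hij
  simp only [ovr]
  constructor
  · -- clause 1 : cle (E i) (E j), (T, F) forbidden
    intro hc ⟨ha, hb⟩
    by_cases h1 : s ∈ (E i).1
    · -- then s ∈ (E j).1, so value at j is true
      have : s ∈ (E j).1 := hc.1 h1
      simp [this] at hb
    · by_cases h2 : s ∈ (E i).2
      · simp [h1, h2] at ha
      · simp [h1, h2] at ha
        -- σ i = true; now look at j
        by_cases k1 : s ∈ (E j).1
        · simp [k1] at hb
        · by_cases k2 : s ∈ (E j).2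
          · -- s ∈ (E j).2 ⊆ (E i).2, contradiction with h2
            exact h2 (hc.2 k2)
          · simp [k1, k2] at hb
            exact (hσ i j hij).1 hc ⟨ha, hb⟩
  constructor
  · -- clause 2 : cle (E j) (E i), (b=T, a=F) forbidden
    intro hc ⟨hb, ha⟩
    by_cases k1 : s ∈ (E j).1
    · have : s ∈ (E i).1 := hc.1 k1
      simp [this] at ha
    · by_cases k2 : s ∈ (E j).2
      · simp [k1, k2] at hb
      · simp [k1, k2] at hb
        by_cases h1 : s ∈ (E i).1
        · simp [h1] at ha
        · by_cases h2 : s ∈ (E i).2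
          · exact k2 (hc.2 h2)
          · simp [h1, h2] at ha
            exact (hσ i j hij).2.1 hc ⟨hb, ha⟩
  constructor
  · -- clause 3 : cle (E i) (crev (E j)), (T,T) forbidden
    intro hc ⟨ha, hb⟩
    by_cases h1 : s ∈ (E i).1
    · -- s ∈ (E j).2 hence ¬ s ∈ (E j).1, value F
      have h2j : s ∈ (E j).2 := hc.1 h1
      have h1j : s ∉ (E j).1 := fun hx => (hd j).ne_of_mem hx h2j rfl
      simp [h1j, h2j] at hb
    · by_cases h2 : s ∈ (E i).2
      · simp [h1, h2] at ha
      · simp [h1, h2] at ha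
        by_cases k1 : s ∈ (E j).1
        · exact h2 (hc.2 k1)
        · by_cases k2 : s ∈ (E j).2
          · simp [k1, k2] at hb
          · simp [k1, k2] at hb
            exact (hσ i j hij).2.2.1 hc ⟨ha, hb⟩
  · -- clause 4 : strict cle (crev (E j)) (E i), (F,F) forbidden
    intro hc ⟨ha, hb⟩
    by_cases h1 : s ∈ (E i).1
    · simp [h1] at ha
    · by_cases h2 : s ∈ (E i).2
      · -- s ∈ (E i).2 ⊆ (E j).1, so value at j is T
        have : s ∈ (E j).1 := hc.1.2 h2
        simp [this] at hb
      · simp [h1, h2] at ha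
        by_cases k1 : s ∈ (E j).1
        · simp [k1] at hb
        · by_cases k2 : s ∈ (E j).2
          · -- s ∈ (E j).2 ⊆ (E i).1 contra h1
            exact h1 (hc.1.1 k2)
          · simp [k1, k2] at hb
            exact (hσ i j hij).2.2.2 hc ⟨ha, hb⟩


lemma not_pairOK {P Q : Set S × Set S} {a b : Bool} (h : ¬ PairOK P Q a b) :
    (cle P Q ∧ a = true ∧ b = false) ∨ (cle Q P ∧ b = true ∧ a = false) ∨
    (cle P (crev Q) ∧ a = true ∧ b = true) ∨
    ((cle (crev Q) P ∧ ¬ cle P (crev Q)) ∧ a = false ∧ b = false) := by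
  by_contra hc
  push_neg at hc
  exact h ⟨fun h1 hab => (hc.1 h1 hab.1) hab.2,
    fun h2 hab => (hc.2.1 h2 hab.1) hab.2,
    fun h3 hab => (hc.2.2.1 h3 hab.1) hab.2,
    fun h4 hab => (hc.2.2.2 h4 hab.1) hab.2⟩

lemma exists_cons [DecidableEq ι] [Fintype ι] (hinj : Function.Injective E)
    (hd : ∀ i, Disjoint (E i).1 (E i).2)
    (hn1 : ∀ i, (E i).1.Nonempty) (hn2 : ∀ i, (E i).2.Nonempty)
    (hl : ∀ i j, LaminarPair (E i) (E j)) :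
    ∃ σ : ι → Bool, Cons E σ := by
  suffices h : ∀ T : Finset ι, ∃ σ : ι → Bool,
      ∀ i ∈ T, ∀ j ∈ T, i ≠ j → PairOK (E i) (E j) (σ i) (σ j) by
    obtain ⟨σ, hσ⟩ := h Finset.univ
    exact ⟨σ, fun i j hij => hσ i (Finset.mem_univ i) j (Finset.mem_univ j) hij⟩
  intro T
  induction T using Finset.induction_on with
  | empty => exact ⟨fun _ => true, by simp⟩
  | @insert k T hkT ih =>
    obtain ⟨σ, hσ⟩ := ih
    have hb : ∃ b : Bool, ∀ j ∈ T, PairOK (E k) (E j) b (σ j) := by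
      by_contra hcon
      push_neg at hcon
      obtain ⟨j1, hj1, hT⟩ := hcon true
      obtain ⟨j2, hj2, hF⟩ := hcon false
      have hT' := not_pairOK hT
      have hF' := not_pairOK hF
      -- drastically prune impossible boolean combos
      have hT2 : (cle (E k) (E j1) ∧ σ j1 = false) ∨
          (cle (E k) (crev (E j1)) ∧ σ j1 = true) := by
        rcases hT' with h | h | h | h
        · exact Or.inl ⟨h.1, h.2.2⟩
        · exact absurd h.2.2 (by simp)
        · exact Or.inr ⟨h.1, h.2.2⟩
        · exact absurd h.2.1 (by simp)
      have hF2 : (cle (E j2) (E k) ∧ σ j2 = true) ∨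
          ((cle (crev (E j2)) (E k) ∧ ¬ cle (E k) (crev (E j2))) ∧ σ j2 = false) := by
        rcases hF' with h | h | h | h
        · exact absurd h.2.1 (by simp)
        · exact Or.inl ⟨h.1, h.2.1⟩
        · exact absurd h.2.1 (by simp)
        · exact Or.inr ⟨h.1, h.2.2⟩
      rcases hT2 with ⟨hc1, hv1⟩ | ⟨hc1, hv1⟩ <;> rcases hF2 with ⟨hc2, hv2⟩ | ⟨⟨hc2, hc2s⟩, hv2⟩
      · -- (a) : cle (E j2) (E j1), values (T, F)
        rcases eq_or_ne j1 j2 with rfl | hne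
        · rw [hv1] at hv2; exact Bool.noConfusion hv2
        · exact (hσ j2 hj2 j1 hj1 (Ne.symm hne)).1 (cle_trans hc2 hc1) ⟨hv2, hv1⟩
      · -- (b) : cle (crev (E j2)) (E j1), values (F, F)
        rcases eq_or_ne j1 j2 with rfl | hne
        · -- cle (crev (E j1)) (E j1) : (E j1).2 ⊆ (E j1).1, contradiction
          obtain ⟨x, hx⟩ := hn2 j1
          have hx1 : x ∈ (E j1).1 := (cle_trans hc2 hc1).1 hx
          exact (hd j1).ne_of_mem hx1 hx rfl
        · have hstrict : ¬ cle (E j1) (crev (E j2)) := fun hcc =>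
            hc2s (cle_trans hc1 hcc)
          exact (hσ j1 hj1 j2 hj2 hne).2.2.2 ⟨cle_trans hc2 hc1, hstrict⟩ ⟨hv1, hv2⟩
      · -- (c) : cle (E j2) (crev (E j1)), values (T, T)
        rcases eq_or_ne j1 j2 with rfl | hne
        · obtain ⟨x, hx⟩ := hn1 j1
          have hx2 : x ∈ (E j1).2 := (cle_trans hc2 hc1).1 hx
          exact (hd j1).ne_of_mem hx hx2 rfl
        · exact (hσ j2 hj2 j1 hj1 (Ne.symm hne)).2.2.1 (cle_trans hc2 hc1) ⟨hv2, hv1⟩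
      · -- (d) : cle (E j1) (E j2), values (T, F)
        rcases eq_or_ne j1 j2 with rfl | hne
        · rw [hv1] at hv2; exact Bool.noConfusion hv2
        · have : cle (E j1) (E j2) := cle_crev_crev.mp (cle_trans hc2 hc1)
          exact (hσ j1 hj1 j2 hj2 hne).1 this ⟨hv1, hv2⟩
    obtain ⟨b, hbp⟩ := hb
    refine ⟨Function.update σ k b, ?_⟩
    intro i hi j hj hij
    rcases Finset.mem_insert.mp hi with rfl | hiT
    · rcases Finset.mem_insert.mp hj with rfl | hjT
      · exact absurd rfl hij
      · rw [Function.update_self, Function.update_of_ne (ne_of_mem_of_not_mem hjT hkT)]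
        exact hbp j hjT
    · rcases Finset.mem_insert.mp hj with rfl | hjT
      · rw [Function.update_self, Function.update_of_ne (ne_of_mem_of_not_mem hiT hkT)]
        exact pairOK_symm (hbp i hiT)
      · rw [Function.update_of_ne (ne_of_mem_of_not_mem hiT hkT),
          Function.update_of_ne (ne_of_mem_of_not_mem hjT hkT)]
        exact hσ i hiT j hjT hij

lemma exists_min [DecidableEq ι] (f : ι → Set S × Set S) (s : Finset ι) (hs : s.Nonempty) :
    ∃ m ∈ s, ∀ j ∈ s, cle (f j) (f m) → cle (f m) (f j) := by
  classical
  induction s using Finset.induction_on with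
  | empty => exact absurd hs (by simp)
  | @insert a s' ha ih =>
    rcases s'.eq_empty_or_nonempty with rfl | hs'
    · refine ⟨a, Finset.mem_insert_self a _, ?_⟩
      intro j hj _
      simp only [Finset.mem_insert, Finset.notMem_empty, or_false] at hj
      subst hj; exact cle_refl _
    · obtain ⟨m, hm, hmin⟩ := ih hs'
      by_cases hc : cle (f a) (f m)
      · refine ⟨a, Finset.mem_insert_self a _, ?_⟩
        intro j hj hja
        rcases Finset.mem_insert.mp hj with rfl | hj'
        · exact cle_refl _
        · have h1 : cle (f j) (f m) := cle_trans hja hc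
          exact cle_trans hc (hmin j hj' h1)
      · refine ⟨m, Finset.mem_insert_of_mem hm, ?_⟩
        intro j hj hjm
        rcases Finset.mem_insert.mp hj with rfl | hj'
        · exact absurd hjm hc
        · exact hmin j hj' hjm

open Classical in
lemma cons_flip [Fintype ι] [DecidableEq ι] (hinj : Function.Injective E)
    (hl : ∀ i j, LaminarPair (E i) (E j))
    {σ τ : ι → Bool} (hσ : Cons E σ) (hτ : Cons E τ) (hne : σ ≠ τ) :
    ∃ i, σ i ≠ τ i ∧ Cons E (Function.update σ i (τ i)) := by
  classical
  set Δ : Finset ι := Finset.univ.filter (fun i => σ i ≠ τ i) with hΔ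
  have hΔne : Δ.Nonempty := by
    rcases Function.ne_iff.mp hne with ⟨i, hi⟩
    exact ⟨i, by simp [hΔ, hi]⟩
  set Qof : ι → Set S × Set S := fun i => if σ i = true then E i else crev (E i) with hQof
  obtain ⟨m, hmΔ, hmmin⟩ := exists_min Qof Δ hΔne
  -- choose i : prefer an element with σ i = true among the minimal ones
  have key : ∃ i ∈ Δ, (∀ j ∈ Δ, cle (Qof j) (Qof i) → cle (Qof i) (Qof j)) ∧
      (σ i = false → ∀ k ∈ Δ, σ k = true →
        (∀ j ∈ Δ, cle (Qof j) (Qof k) → cle (Qof k) (Qof j)) → False) := by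
    by_cases hex : ∃ i ∈ Δ, σ i = true ∧
        (∀ j ∈ Δ, cle (Qof j) (Qof i) → cle (Qof i) (Qof j))
    · obtain ⟨i, hiΔ, hiT, himin⟩ := hex
      refine ⟨i, hiΔ, himin, ?_⟩
      intro hF; rw [hiT] at hF; exact absurd hF (by simp)
    · refine ⟨m, hmΔ, hmmin, ?_⟩
      intro _ k hkΔ hkT hkmin
      exact hex ⟨k, hkΔ, hkT, hkmin⟩
  obtain ⟨i, hiΔ, hmin, hpref⟩ := key
  have hiστ : σ i ≠ τ i := by
    have := Finset.mem_filter.mp hiΔ; exact this.2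
  refine ⟨i, hiστ, ?_⟩
  have hτi : τ i = !σ i := by
    cases h1 : σ i <;> cases h2 : τ i <;> simp_all
  have main : ∀ k, k ≠ i → PairOK (E i) (E k) (!σ i) (σ k) := by
    intro k hki
    by_cases hkΔ : k ∈ Δ
    · have hkστ : σ k ≠ τ k := (Finset.mem_filter.mp hkΔ).2
      refine ⟨?_, ?_, ?_, ?_⟩
      · -- clause 1 : cle (E i) (E k), values (T,F) ⇒ σ i = false, σ k = false
        rintro hc ⟨ha, hb⟩
        have hσi : σ i = false := by cases h : σ i <;> simp_all
        have hQi : Qof i = crev (E i) := by simp [hQof, hσi]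
        have hQk : Qof k = crev (E k) := by simp [hQof, hb]
        have hQ : cle (Qof k) (Qof i) := by
          rw [hQi, hQk]; exact cle_crev_crev.mpr hc
        have h2 := hmin k hkΔ hQ
        have heq : Qof i = Qof k := cle_antisymm h2 hQ
        rw [hQi, hQk] at heq
        exact hki (hinj (crev_inj heq)).symm
      · -- clause 2 : cle (E k) (E i), values (σ k = T, σ i = T)
        rintro hc ⟨hb, ha⟩
        have hσi : σ i = true := by cases h : σ i <;> simp_all
        have hQi : Qof i = E i := by simp [hQof, hσi]
        have hQk : Qof k = E k := by simp [hQof, hb]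
        have hQ : cle (Qof k) (Qof i) := by rw [hQi, hQk]; exact hc
        have h2 := hmin k hkΔ hQ
        have heq : Qof i = Qof k := cle_antisymm h2 hQ
        rw [hQi, hQk] at heq
        exact hki (hinj heq).symm
      · -- clause 3 : cle (E i) (crev (E k)), values (T,T) ⇒ σ i = false, σ k = true
        rintro hc ⟨ha, hb⟩
        have hσi : σ i = false := by cases h : σ i <;> simp_all
        have hQi : Qof i = crev (E i) := by simp [hQof, hσi]
        have hQk : Qof k = E k := by simp [hQof, hb]
        have hQ : cle (Qof k) (Qof i) := by
          rw [hQi, hQk]; exact cle_crev_symm.mp hc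
        have h2 := hmin k hkΔ hQ
        have hQe : Qof k = Qof i := cle_antisymm hQ h2
        refine hpref hσi k hkΔ hb ?_
        intro j hj hjk
        rw [hQe] at hjk ⊢
        exact hmin j hj hjk
      · -- clause 4 : strict cle (crev (E k)) (E i), values (F,F) ⇒ σ i = true, σ k = false
        rintro ⟨hc, hcs⟩ ⟨ha, hb⟩
        have hσi : σ i = true := by cases h : σ i <;> simp_all
        have hQi : Qof i = E i := by simp [hQof, hσi]
        have hQk : Qof k = crev (E k) := by simp [hQof, hb]
        have hQ : cle (Qof k) (Qof i) := by rw [hQi, hQk]; exact hc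
        have h2 := hmin k hkΔ hQ
        rw [hQi, hQk] at h2
        exact hcs h2
    · have hkστ : σ k = τ k := by
        by_contra hcc
        exact hkΔ (Finset.mem_filter.mpr ⟨Finset.mem_univ k, hcc⟩)
      rw [← hτi, hkστ]
      exact hτ i k (Ne.symm hki)
  intro j k hjk
  rcases eq_or_ne j i with rfl | hji
  · rw [Function.update_self, Function.update_of_ne (Ne.symm hjk), hτi]
    exact main k (Ne.symm hjk)
  · rcases eq_or_ne k i with rfl | hki
    · rw [Function.update_self, Function.update_of_ne hji, hτi]
      exact pairOK_symm (main j hji)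
    · rw [Function.update_of_ne hji, Function.update_of_ne hki]
      exact hσ j k hjk

lemma agree_off [DecidableEq ι] (hl : ∀ i j, LaminarPair (E i) (E j)) {i : ι} {σ τ : ι → Bool}
    (hσ : Cons E σ) (hσ' : Cons E (Function.update σ i (!σ i)))
    (hτ : Cons E τ) (hτ' : Cons E (Function.update τ i (!τ i)))
    (j : ι) (hj : j ≠ i) : σ j = τ j := by
  by_contra hne
  have hij : i ≠ j := Ne.symm hj
  have A := hσ i j hij
  have B := hσ' i j hij
  rw [Function.update_self, Function.update_of_ne hj] at B
  have C := hτ i j hij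
  have D := hτ' i j hij
  rw [Function.update_self, Function.update_of_ne hj] at D
  have hτj : τ j = !σ j := by
    cases h1 : σ j <;> cases h2 : τ j <;> simp_all
  rw [hτj] at C D
  apply no_four hl i j
  cases h1 : σ i <;> cases h2 : σ j <;> cases h3 : τ i <;>
    refine ⟨?_, ?_, ?_, ?_⟩ <;> simp_all

end Family

open Classical in
theorem aux {S : Type*} {ι : Type*} [Fintype ι] [DecidableEq ι]
    (E : ι → Set S × Set S) (hinj : Function.Injective E)
    (hd : ∀ i, Disjoint (E i).1 (E i).2)
    (hn1 : ∀ i, (E i).1.Nonempty) (hn2 : ∀ i, (E i).2.Nonempty)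
    (hl : ∀ i j, LaminarPair (E i) (E j))
    (w : ι → ℝ) (hw : ∀ i, 0 < w i)
    (μ : S → S → ℝ)
    (hμ : ∀ s t, μ s t =
      ∑ i ∈ Finset.univ.filter (fun i => s ∈ (E i).1 ∧ t ∈ (E i).2), w i) :
    ∃ (n : ℕ) (G : SimpleGraph (Fin n)), G.IsTree ∧
      ∃ (dir : Fin n → Fin n → Bool) (α' : Fin n → Fin n → ℝ)
        (D : Fin n → Fin n → ℝ) (F : S → Set (Fin n)),
        (∀ u v, G.Adj u v → (dir u v = !dir v u)) ∧
        (∀ u v, 0 ≤ α' u v) ∧ (∀ u v, α' u v = α' v u) ∧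
        (∀ (u v : Fin n) (w : G.Walk u v), w.IsPath →
          D u v = (w.darts.map (fun d =>
            if dir d.toProd.1 d.toProd.2 then α' d.toProd.1 d.toProd.2 else 0)).sum) ∧
        (∀ s, (F s).Nonempty ∧ (G.induce (F s)).Connected) ∧
        (∀ s t, μ s t = sInf {x : ℝ | ∃ u ∈ F s, ∃ v ∈ F t, x = D u v}) := by
  classical
  -- the vertex type : consistent boolean assignments
  let V := {σ : ι → Bool // Cons E σ}
  obtain ⟨σ0, hσ0⟩ := exists_cons hinj hd hn1 hn2 hl
  let n := Fintype.card V
  let e : V ≃ Fin n := Fintype.equivFin V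
  let v : Fin n → ι → Bool := fun a => (e.symm a).1
  have hva : ∀ a, Cons E (v a) := fun a => (e.symm a).2
  have hvinj : ∀ a b, v a = v b → a = b := by
    intro a b h
    have : e.symm a = e.symm b := Subtype.ext h
    exact e.symm.injective this
  have hvsurj : ∀ (σ : ι → Bool), Cons E σ → ∃ a, v a = σ := by
    intro σ h
    exact ⟨e ⟨σ, h⟩, by simp [v]⟩
  -- the graph
  let G : SimpleGraph (Fin n) :=
    { Adj := fun a b => ∃ i, v a i ≠ v b i ∧ ∀ j, j ≠ i → v a j = v b j
      symm := by
        constructor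
        rintro a b ⟨i, h1, h2⟩
        exact ⟨i, Ne.symm h1, fun j hj => (h2 j hj).symm⟩
      loopless := by constructor; rintro a ⟨i, h1, _⟩; exact h1 rfl }
  have hGadj : ∀ a b, G.Adj a b ↔
      ∃ i, v a i ≠ v b i ∧ ∀ j, j ≠ i → v a j = v b j := fun a b => Iff.rfl
  -- adjacent vertices are updates of one another
  have hupd : ∀ {a b : Fin n} {i : ι}, v a i ≠ v b i → (∀ j, j ≠ i → v a j = v b j) →
      v b = Function.update (v a) i (!(v a i)) := by
    intro a b i h1 h2
    funext j
    rcases eq_or_ne j i with rfl | hj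
    · rw [Function.update_self]
      exact bool_eq_not_of_ne (Ne.symm h1)
    · rw [Function.update_of_ne hj]
      exact (h2 j hj).symm
  -- uniqueness of the edge flipping a given coordinate
  have hedge_unique : ∀ {a b c d : Fin n} {i : ι}, G.Adj a b → G.Adj c d →
      v a i ≠ v b i → v c i ≠ v d i → (a = c ∧ b = d) ∨ (a = d ∧ b = c) := by
    intro a b c d i hab hcd hvab hvcd
    obtain ⟨i', h1, h2⟩ := hab
    have hii' : i = i' := by
      by_contra hne
      exact hvab (h2 i hne)
    subst hii'
    obtain ⟨i', h1', h2'⟩ := hcd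
    have hii' : i = i' := by
      by_contra hne
      exact hvcd (h2' i hne)
    subst hii'
    have hb : v b = Function.update (v a) i (!(v a i)) := hupd h1 h2
    have hdd : v d = Function.update (v c) i (!(v c i)) := hupd h1' h2'
    have hagree : ∀ j, j ≠ i → v a j = v c j := by
      intro j hj
      refine agree_off hl (hva a) ?_ (hva c) ?_ j hj
      · rw [← hb]; exact hva b
      · rw [← hdd]; exact hva d
    rcases eq_or_ne (v a i) (v c i) with hh | hh
    · left
      have hac : v a = v c := by
        funext j
        rcases eq_or_ne j i with rfl | hj
        · exact hh
        · exact hagree j hj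
      have h1 : a = c := hvinj _ _ hac
      have h2 : b = d := hvinj _ _ (by rw [hb, hdd, hac])
      exact ⟨h1, h2⟩
    · right
      have hvci : v d i = !(v c i) := by rw [hdd, Function.update_self]
      have hadi : v a i = v d i := by
        rw [hvci]
        exact bool_eq_not_of_ne hh
      have had : v a = v d := by
        funext j
        rcases eq_or_ne j i with rfl | hj
        · exact hadi
        · rw [hagree j hj, hdd, Function.update_of_ne hj]
      have hbc : v b = v c := by
        funext j
        rcases eq_or_ne j i with rfl | hj
        · rw [hb, Function.update_self]
          exact (bool_eq_not_of_ne (Ne.symm hh)).symm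
        · rw [hb, Function.update_of_ne hj, hagree j hj]
      exact ⟨hvinj _ _ had, hvinj _ _ hbc⟩
  -- a walk whose endpoints differ at i must contain a dart flipping i
  have hflip_dart : ∀ {x y : Fin n} (p : G.Walk x y) (i : ι), v x i ≠ v y i →
      ∃ d ∈ p.darts, v d.toProd.1 i ≠ v d.toProd.2 i := by
    intro x y p
    induction p with
    | nil => intro i h; exact absurd rfl h
    | @cons x' y' z' h p ih =>
      intro i hi
      rcases eq_or_ne (v x' i) (v y' i) with he | hne
      · obtain ⟨d, hd1, hd2⟩ := ih i (fun hc => hi (he.trans hc))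
        exact ⟨d, by simp [SimpleGraph.Walk.darts_cons, hd1], hd2⟩
      · exact ⟨⟨(x', y'), h⟩, by simp [SimpleGraph.Walk.darts_cons], hne⟩
  -- walks between consistent assignments staying between them
  have hwalk : ∀ (k : ℕ) (a b : Fin n),
      (Finset.univ.filter (fun i => v a i ≠ v b i)).card = k →
      ∃ p : G.Walk a b, ∀ x ∈ p.support, ∀ i, v x i = v a i ∨ v x i = v b i := by
    intro k
    induction k with
    | zero =>
      intro a b hk
      have : v a = v b := by
        funext i
        by_contra hc
        have : i ∈ Finset.univ.filter (fun i => v a i ≠ v b i) := by simp [hc]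
        rw [Finset.card_eq_zero.mp hk] at this
        exact absurd this (Finset.notMem_empty i)
      obtain rfl := hvinj _ _ this
      refine ⟨SimpleGraph.Walk.nil, ?_⟩
      intro x hx i
      have hxa : x = a := by simpa using hx
      subst hxa
      left; rfl
    | succ k ih =>
      intro a b hk
      have hne : v a ≠ v b := by
        intro hc
        rw [hc] at hk
        simp at hk
      obtain ⟨i, hi, hcons⟩ := cons_flip hinj hl (hva a) (hva b) hne
      obtain ⟨a', ha'⟩ := hvsurj _ hcons
      have hadj : G.Adj a a' := by
        refine ⟨i, ?_, ?_⟩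
        · rw [ha', Function.update_self]
          exact hi
        · intro j hj
          rw [ha', Function.update_of_ne hj]
      have hcard : (Finset.univ.filter (fun j => v a' j ≠ v b j)).card = k := by
        have hset : Finset.univ.filter (fun j => v a' j ≠ v b j) =
            (Finset.univ.filter (fun j => v a j ≠ v b j)).erase i := by
          ext j
          simp only [Finset.mem_filter, Finset.mem_erase, Finset.mem_univ, true_and]
          constructor
          · intro hj
            rcases eq_or_ne j i with rfl | hji
            · rw [ha', Function.update_self] at hj
              exact absurd rfl hj
            · rw [ha', Function.update_of_ne hji] at hj
              exact ⟨hji, hj⟩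
          · rintro ⟨hji, hj⟩
            rw [ha', Function.update_of_ne hji]
            exact hj
        rw [hset, Finset.card_erase_of_mem (by simp [hi]), hk]
        rfl
      obtain ⟨p, hp⟩ := ih a' b hcard
      refine ⟨SimpleGraph.Walk.cons hadj p, ?_⟩
      intro x hx j
      rw [SimpleGraph.Walk.support_cons, List.mem_cons] at hx
      rcases hx with rfl | hx
      · left; rfl
      · rcases hp x hx j with h | h
        · rcases eq_or_ne j i with rfl | hji
          · right
            rw [h, ha', Function.update_self]
          · left
            rw [h, ha', Function.update_of_ne hji]
        · right; exact h
  -- connectedness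
  have hconn : G.Connected := by
    have hnon : Nonempty (Fin n) := by
      obtain ⟨a, _⟩ := hvsurj σ0 hσ0
      exact ⟨a⟩
    have hpre : G.Preconnected := by
      intro a b
      obtain ⟨p, _⟩ := hwalk _ a b rfl
      exact ⟨p⟩
    haveI := hnon
    exact ⟨hpre⟩
  -- acyclicity
  have hacyc : G.IsAcyclic := by
    intro x p hp
    cases p with
    | nil => exact hp.ne_nil rfl
    | @cons _ y _ h q =>
      obtain ⟨i, h1, h2⟩ := (hGadj _ _).mp h
      obtain ⟨d, hdq, hdf⟩ := hflip_dart q i (Ne.symm h1)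
      have hnodup : (SimpleGraph.Walk.cons h q).edges.Nodup :=
        hp.isCircuit.isTrail.edges_nodup
      rw [SimpleGraph.Walk.edges_cons, List.nodup_cons] at hnodup
      apply hnodup.1
      have hmem : d.edge ∈ q.edges := List.mem_map_of_mem hdq
      have hedge : d.edge = s(x, y) := by
        rcases hedge_unique h d.adj h1 hdf with ⟨hx1, hx2⟩ | ⟨hx1, hx2⟩
        · show s(d.toProd.1, d.toProd.2) = s(x, y)
          rw [← hx1, ← hx2]
        · show s(d.toProd.1, d.toProd.2) = s(x, y)
          rw [← hx1, ← hx2, Sym2.eq_swap]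
      rw [← hedge]
      exact hmem
  -- the data
  let dir : Fin n → Fin n → Bool := fun a b => decide (∃ i, v a i = true ∧ v b i = false)
  let wα : Fin n → Fin n → ℝ := fun a b =>
    ∑ i ∈ Finset.univ.filter (fun i => v a i ≠ v b i), w i
  let Dd : Fin n → Fin n → ℝ := fun a b =>
    ∑ i ∈ Finset.univ.filter (fun i => v a i = true ∧ v b i = false), w i
  let F : S → Set (Fin n) := fun s =>
    {a | ∀ i, (s ∈ (E i).1 → v a i = true) ∧ (s ∈ (E i).2 → v a i = false)}
  have hdirdef : ∀ a b, dir a b = decide (∃ i, v a i = true ∧ v b i = false) :=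
    fun _ _ => rfl
  have hwαdef : ∀ a b, wα a b = ∑ i ∈ Finset.univ.filter (fun i => v a i ≠ v b i), w i :=
    fun _ _ => rfl
  have hDddef : ∀ a b,
      Dd a b = ∑ i ∈ Finset.univ.filter (fun i => v a i = true ∧ v b i = false), w i :=
    fun _ _ => rfl
  have hFdef : ∀ s a, a ∈ F s ↔
      ∀ i, (s ∈ (E i).1 → v a i = true) ∧ (s ∈ (E i).2 → v a i = false) :=
    fun _ _ => Iff.rfl
  refine ⟨n, G, ⟨hconn, hacyc⟩, dir, wα, Dd, F, ?_, ?_, ?_, ?_, ?_, ?_⟩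
  · -- dir is an orientation
    intro a b hadj
    obtain ⟨i, h1, h2⟩ := (hGadj _ _).mp hadj
    have hab : dir a b = v a i := by
      cases hc : v a i with
      | true =>
        rw [hdirdef]
        apply decide_eq_true
        refine ⟨i, hc, ?_⟩
        rw [bool_eq_not_of_ne (Ne.symm h1), hc]
        rfl
      | false =>
        rw [hdirdef]
        apply decide_eq_false
        rintro ⟨j, hj1, hj2⟩
        rcases eq_or_ne j i with rfl | hji
        · rw [hc] at hj1; exact Bool.noConfusion hj1
        · rw [h2 j hji] at hj1; rw [hj1] at hj2; exact Bool.noConfusion hj2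
    have hba : dir b a = v b i := by
      cases hc : v b i with
      | true =>
        rw [hdirdef]
        apply decide_eq_true
        refine ⟨i, hc, ?_⟩
        rw [bool_eq_not_of_ne h1, hc]
        rfl
      | false =>
        rw [hdirdef]
        apply decide_eq_false
        rintro ⟨j, hj1, hj2⟩
        rcases eq_or_ne j i with rfl | hji
        · rw [hc] at hj1; exact Bool.noConfusion hj1
        · rw [← h2 j hji] at hj1; rw [hj1] at hj2; exact Bool.noConfusion hj2
    rw [hab, hba, bool_eq_not_of_ne h1]
  · -- nonnegativity
    intro a b
    rw [hwαdef]
    exact Finset.sum_nonneg (fun i _ => (hw i).le)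
  · -- symmetry
    intro a b
    rw [hwαdef, hwαdef]
    apply Finset.sum_congr _ (fun _ _ => rfl)
    ext j
    simp [ne_comm]
  · -- the path-sum property
    intro a b p
    induction p with
    | nil =>
      intro _
      rw [hDddef]
      have h0 : ∀ x : Fin n, Finset.univ.filter (fun i => v x i = true ∧ v x i = false) = ∅ :=
        fun x => Finset.filter_eq_empty_iff.mpr (fun i _ => by
          rintro ⟨hh1, hh2⟩
          rw [hh1] at hh2
          exact Bool.noConfusion hh2)
      rw [h0]
      simp
    | @cons a c b h q ih =>
      intro hp
      have hq : q.IsPath := hp.of_cons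
      have hnotin : a ∉ q.support := ((SimpleGraph.Walk.cons_isPath_iff h q).mp hp).2
      obtain ⟨i, h1, h2⟩ := (hGadj _ _).mp h
      have hvb : v b i = v c i := by
        by_contra hcc
        obtain ⟨d, hdq, hdf⟩ := hflip_dart q i (fun hx => hcc hx.symm)
        rcases hedge_unique h d.adj h1 hdf with ⟨hx1, _⟩ | ⟨hx1, _⟩
        · exact hnotin (hx1 ▸ SimpleGraph.Walk.dart_fst_mem_support_of_mem_darts q hdq)
        · exact hnotin (hx1 ▸ SimpleGraph.Walk.dart_snd_mem_support_of_mem_darts q hdq)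
      rw [SimpleGraph.Walk.darts_cons, List.map_cons, List.sum_cons, ← ih hq]
      cases hai : v a i with
      | true =>
        have hvc : v c i = false := by
          rw [bool_eq_not_of_ne (Ne.symm h1), hai]
          rfl
        have hdir : dir a c = true := by
          rw [hdirdef]; exact decide_eq_true ⟨i, hai, hvc⟩
        have hα : wα a c = w i := by
          have hone : Finset.univ.filter (fun j => v a j ≠ v c j) = {i} := by
            ext j
            simp only [Finset.mem_filter, Finset.mem_univ, true_and, Finset.mem_singleton]
            constructor
            · intro hj
              by_contra hji
              exact hj (h2 j hji)
            · rintro rfl; exact h1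
          rw [hwαdef, hone, Finset.sum_singleton]
        have hD : Dd a b = w i + Dd c b := by
          have hins : Finset.univ.filter (fun j => v a j = true ∧ v b j = false)
              = insert i (Finset.univ.filter (fun j => v c j = true ∧ v b j = false)) := by
            ext j
            simp only [Finset.mem_filter, Finset.mem_univ, true_and, Finset.mem_insert]
            constructor
            · rintro ⟨hj1, hj2⟩
              rcases eq_or_ne j i with rfl | hji
              · exact Or.inl rfl
              · exact Or.inr ⟨by rw [← h2 j hji]; exact hj1, hj2⟩
            · rintro (rfl | ⟨hj1, hj2⟩)
              · exact ⟨hai, by rw [hvb, hvc]⟩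
              · rcases eq_or_ne j i with rfl | hji
                · rw [hvc] at hj1; exact Bool.noConfusion hj1
                · exact ⟨by rw [h2 j hji]; exact hj1, hj2⟩
          have hnm : i ∉ Finset.univ.filter (fun j => v c j = true ∧ v b j = false) := by
            simp [hvc]
          rw [hDddef, hins, Finset.sum_insert hnm, ← hDddef]
        rw [hD, hdir]
        simp [hα]
      | false =>
        have hvc : v c i = true := by
          rw [bool_eq_not_of_ne (Ne.symm h1), hai]
          rfl
        have hdir : dir a c = false := by
          rw [hdirdef]
          apply decide_eq_false
          rintro ⟨j, hj1, hj2⟩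
          rcases eq_or_ne j i with rfl | hji
          · rw [hai] at hj1; exact Bool.noConfusion hj1
          · rw [h2 j hji] at hj1; rw [hj1] at hj2; exact Bool.noConfusion hj2
        have hD : Dd a b = Dd c b := by
          rw [hDddef, hDddef]
          apply Finset.sum_congr _ (fun _ _ => rfl)
          ext j
          simp only [Finset.mem_filter, Finset.mem_univ, true_and]
          rcases eq_or_ne j i with rfl | hji
          · constructor
            · rintro ⟨hj1, _⟩
              rw [hai] at hj1; exact Bool.noConfusion hj1
            · rintro ⟨_, hj2⟩
              rw [hvb, hvc] at hj2; exact Bool.noConfusion hj2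
          · rw [h2 j hji]
        rw [hD, hdir]
        simp
  · -- subtrees : nonempty and connected
    intro s
    have hmemF : ∀ a, (∀ i, (s ∈ (E i).1 → v a i = true) ∧ (s ∈ (E i).2 → v a i = false))
        → a ∈ F s := fun a h => h
    obtain ⟨a, ha⟩ := hvsurj _ (cons_override hd hσ0 s)
    have haF : a ∈ F s := by
      rw [hFdef]
      intro i
      constructor
      · intro h1
        rw [ha]
        exact ovr_mem1 h1
      · intro h2
        have h1 : s ∉ (E i).1 := fun hx => (hd i).ne_of_mem hx h2 rfl
        rw [ha]
        exact ovr_mem2 h1 h2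
    refine ⟨⟨a, haF⟩, ?_⟩
    have hlift : ∀ (c d : Fin n) (p : G.Walk c d), (∀ z ∈ p.support, z ∈ F s) →
        ∀ (hc : c ∈ F s) (hd' : d ∈ F s),
        (G.induce (F s)).Reachable ⟨c, hc⟩ ⟨d, hd'⟩ := by
      intro c d p
      induction p with
      | nil =>
        intro _ hc hd'
        exact SimpleGraph.Reachable.refl _
      | @cons c m d h q ih =>
        intro hsup hc hd'
        have hm : m ∈ F s := hsup m (by simp [SimpleGraph.Walk.support_cons])
        have hadj : (G.induce (F s)).Adj ⟨c, hc⟩ ⟨m, hm⟩ := by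
          simp only [SimpleGraph.comap_adj, Function.Embedding.coe_subtype]
          exact h
        refine (hadj.reachable).trans (ih ?_ hm hd')
        intro z hz
        exact hsup z (by simp [SimpleGraph.Walk.support_cons, hz])
    haveI hnonF : Nonempty ↥(F s) := ⟨⟨a, haF⟩⟩
    have hpreF : (G.induce (F s)).Preconnected := by
      rintro ⟨x, hx⟩ ⟨y, hy⟩
      obtain ⟨p, hpb⟩ := hwalk _ x y rfl
      refine hlift x y p ?_ hx hy
      intro z hz
      rw [hFdef]
      intro i
      constructor
      · intro h1
        rcases hpb z hz i with h | h
        · rw [h]; exact ((hFdef s x).mp hx i).1 h1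
        · rw [h]; exact ((hFdef s y).mp hy i).1 h1
      · intro h2
        rcases hpb z hz i with h | h
        · rw [h]; exact ((hFdef s x).mp hx i).2 h2
        · rw [h]; exact ((hFdef s y).mp hy i).2 h2
    exact ⟨hpreF⟩
  · -- the distance formula
    intro s t
    have hσ1 : Cons E (ovr E s σ0) := cons_override hd hσ0 s
    have hσ2 : Cons E (ovr E t (ovr E s σ0)) := cons_override hd hσ1 t
    have hσ3 : Cons E (ovr E s (ovr E t (ovr E s σ0))) := cons_override hd hσ2 s
    obtain ⟨u, hu⟩ := hvsurj _ hσ3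
    obtain ⟨vv, hvv⟩ := hvsurj _ hσ2
    have huF : u ∈ F s := by
      rw [hFdef]
      intro i
      constructor
      · intro h1
        rw [hu]
        exact ovr_mem1 h1
      · intro h2
        rw [hu]
        exact ovr_mem2 (fun hx => (hd i).ne_of_mem hx h2 rfl) h2
    have hvF : vv ∈ F t := by
      rw [hFdef]
      intro i
      constructor
      · intro h1
        rw [hvv]
        exact ovr_mem1 h1
      · intro h2
        rw [hvv]
        exact ovr_mem2 (fun hx => (hd i).ne_of_mem hx h2 rfl) h2
    have hset : Finset.univ.filter (fun i => v u i = true ∧ v vv i = false)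
        = Finset.univ.filter (fun i => s ∈ (E i).1 ∧ t ∈ (E i).2) := by
      ext i
      simp only [Finset.mem_filter, Finset.mem_univ, true_and]
      rw [hu, hvv]
      constructor
      · rintro ⟨h3, h2c⟩
        by_cases hs1 : s ∈ (E i).1
        · refine ⟨hs1, ?_⟩
          by_cases ht1 : t ∈ (E i).1
          · rw [ovr_mem1 ht1] at h2c; exact Bool.noConfusion h2c
          · by_cases ht2 : t ∈ (E i).2
            · exact ht2
            · rw [ovr_not ht1 ht2, ovr_mem1 hs1] at h2c
              exact Bool.noConfusion h2c
        · exfalso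
          by_cases hs2 : s ∈ (E i).2
          · rw [ovr_mem2 hs1 hs2] at h3; exact Bool.noConfusion h3
          · rw [ovr_not hs1 hs2] at h3
            rw [h3] at h2c
            exact Bool.noConfusion h2c
      · rintro ⟨hs1, ht2⟩
        have ht1 : t ∉ (E i).1 := fun hx => (hd i).ne_of_mem hx ht2 rfl
        exact ⟨ovr_mem1 hs1, ovr_mem2 ht1 ht2⟩
    have hmem : μ s t ∈ {x : ℝ | ∃ u' ∈ F s, ∃ v' ∈ F t, x = Dd u' v'} := by
      refine ⟨u, huF, vv, hvF, ?_⟩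
      rw [hμ, hDddef, hset]
    have hlb : ∀ x ∈ {x : ℝ | ∃ u' ∈ F s, ∃ v' ∈ F t, x = Dd u' v'}, μ s t ≤ x := by
      rintro x ⟨u', hu', v', hv', rfl⟩
      rw [hμ, hDddef]
      apply Finset.sum_le_sum_of_subset_of_nonneg
      · intro i hi
        simp only [Finset.mem_filter, Finset.mem_univ, true_and] at hi ⊢
        exact ⟨((hFdef s u').mp hu' i).1 hi.1, ((hFdef t v').mp hv' i).2 hi.2⟩
      · intro i _ _
        exact (hw i).le
    exact le_antisymm (le_csInf ⟨_, hmem⟩ hlb) (csInf_le ⟨μ s t, hlb⟩ hmem)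

end Stmt15Aux


open Classical in
/-- a directed distance that is a positive combination of the cut
distances of a laminar family of partial cuts has an oriented-tree realization.
The oriented tree is a tree `G` on `Fin n` with an orientation `dir`, edge
lengths `α'`, tree distance `D` (sum of forward edge lengths on the unique
path), and subtrees `F s` (nonempty sets inducing connected subgraphs), with
`μ(s,t) = min { D u v : u ∈ F s, v ∈ F t }`. -/
theorem stmt_15 {S : Type*} [Fintype S]
    (𝒜 : Finset (Set S × Set S))
    (hdisj : ∀ P ∈ 𝒜, Disjoint P.1 P.2)
    (hlam : ∀ P ∈ 𝒜, ∀ Q ∈ 𝒜, LaminarPair P Q)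
    (α : Set S × Set S → ℝ) (hα : ∀ P ∈ 𝒜, 0 < α P)
    (μ : S → S → ℝ)
    (hμ : ∀ s t, μ s t = ∑ P ∈ 𝒜, α P * (if s ∈ P.1 ∧ t ∈ P.2 then 1 else 0)) :
    ∃ (n : ℕ) (G : SimpleGraph (Fin n)), G.IsTree ∧
      ∃ (dir : Fin n → Fin n → Bool) (α' : Fin n → Fin n → ℝ)
        (D : Fin n → Fin n → ℝ) (F : S → Set (Fin n)),
        (∀ u v, G.Adj u v → (dir u v = !dir v u)) ∧
        (∀ u v, 0 ≤ α' u v) ∧ (∀ u v, α' u v = α' v u) ∧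
        (∀ (u v : Fin n) (w : G.Walk u v), w.IsPath →
          D u v = (w.darts.map (fun d =>
            if dir d.toProd.1 d.toProd.2 then α' d.toProd.1 d.toProd.2 else 0)).sum) ∧
        (∀ s, (F s).Nonempty ∧ (G.induce (F s)).Connected) ∧
        (∀ s t, μ s t = sInf {x : ℝ | ∃ u ∈ F s, ∃ v ∈ F t, x = D u v}) := by

  classical
  set 𝒜' : Finset (Set S × Set S) := 𝒜.filter (fun P => P.1.Nonempty ∧ P.2.Nonempty)
    with h𝒜'
  have hsub : ∀ P ∈ 𝒜', P ∈ 𝒜 := fun P hP => (Finset.mem_filter.mp hP).1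
  refine Stmt15Aux.aux (ι := {P : Set S × Set S // P ∈ 𝒜'}) (fun i => i.1)
    Subtype.coe_injective (fun i => hdisj i.1 (hsub i.1 i.2))
    (fun i => ((Finset.mem_filter.mp i.2).2).1)
    (fun i => ((Finset.mem_filter.mp i.2).2).2)
    (fun i j => hlam i.1 (hsub i.1 i.2) j.1 (hsub j.1 j.2))
    (fun i => α i.1) (fun i => hα i.1 (hsub i.1 i.2)) μ ?_
  intro s t
  rw [hμ s t]
  have h1 : ∑ P ∈ 𝒜, α P * (if s ∈ P.1 ∧ t ∈ P.2 then 1 else 0)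
      = ∑ P ∈ 𝒜', α P * (if s ∈ P.1 ∧ t ∈ P.2 then 1 else 0) := by
    refine (Finset.sum_subset (Finset.filter_subset _ _) ?_).symm
    intro x hx hnx
    have hcond : ¬ (s ∈ x.1 ∧ t ∈ x.2) := by
      intro hc
      exact hnx (Finset.mem_filter.mpr ⟨hx, ⟨s, hc.1⟩, ⟨t, hc.2⟩⟩)
    rw [if_neg hcond, mul_zero]
  rw [h1]
  rw [← Finset.sum_coe_sort 𝒜' (fun P => α P * (if s ∈ P.1 ∧ t ∈ P.2 then 1 else 0))]
  rw [Finset.sum_filter]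
  apply Finset.sum_congr rfl
  intro i _
  by_cases hc : s ∈ (i.1).1 ∧ t ∈ (i.1).2
  · rw [if_pos hc, if_pos hc, mul_one]
  · rw [if_neg hc, if_neg hc, mul_zero]
end

section
/- Let Γ be an oriented tree with nonnegative edge lengths α and {F_s}_{s∈S} a family of subtrees realizing the directed distance μ on S, i.e., μ(s,t) = D_{Γ,α}(F_s,F_t). For each edge e ∈ EΓ, deletion of e yields a partial cut (A_e,B_e) on S, where A_e (resp. B_e) consists of those s with F_s entirely in the component containing the tail (resp. head) of e. Then μ = ∑_{e ∈ EΓ} α(e) δ_{A_e,B_e}. -/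
open scoped BigOperators

open SimpleGraph SimpleGraph.Walk

lemma stmt16_tree_not_reach {V : Type*} {G : SimpleGraph V} (hG : G.IsTree)
    {a b : V} (hab : G.Adj a b) :
    ¬ (G.deleteEdges {s(a, b)}).Reachable a b :=
  (SimpleGraph.isBridge_iff.mp
    ((SimpleGraph.isAcyclic_iff_forall_edge_isBridge.mp hG.IsAcyclic)
      (G.mem_edgeSet.mpr hab)))

lemma stmt16_cross {V : Type*} {G : SimpleGraph V} {u v : V} {e : Sym2 V} (p : G.Walk u v)
    (h : ¬ (G.deleteEdges {e}).Reachable u v) : e ∈ p.edges := by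
  by_contra he
  refine h ⟨p.toDeleteEdges {e} ?_⟩
  intro e' he' hmem
  rw [Set.mem_singleton_iff] at hmem
  subst hmem
  exact he he'

lemma stmt16_reach_of_dart {V : Type*} {G : SimpleGraph V} {d : G.Dart} :
    ∀ {u v : V} (p : G.Walk u v), p.IsPath → d ∈ p.darts →
      (G.deleteEdges {d.edge}).Reachable u d.fst ∧
        (G.deleteEdges {d.edge}).Reachable d.snd v
  | _, _, .nil, _, hd => by simp at hd
  | u, v, .cons h q, hp, hd => by
    rw [darts_cons, List.mem_cons] at hd
    have hq : q.IsPath := hp.of_cons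
    have hnot : u ∉ q.support := ((cons_isPath_iff h q).mp hp).2
    rcases hd with rfl | hd
    · refine ⟨Reachable.refl _, ⟨q.toDeleteEdges _ ?_⟩⟩
      intro e' he' hmem
      rw [Set.mem_singleton_iff] at hmem
      subst hmem
      exact hnot (q.fst_mem_support_of_mem_edges he')
    · obtain ⟨h1, h2⟩ := stmt16_reach_of_dart q hq hd
      refine ⟨Reachable.trans (Adj.reachable ?_) h1, h2⟩
      rw [SimpleGraph.deleteEdges_adj]
      refine ⟨h, ?_⟩
      rw [Set.mem_singleton_iff]
      intro heq
      have hmem : d.edge ∈ q.edges := List.mem_map_of_mem (f := Dart.edge) hd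
      rw [← heq] at hmem
      exact hnot (q.fst_mem_support_of_mem_edges hmem)

open Classical in
/-- an oriented-tree realization `(Γ,α,{F_s})` of μ yields the
cut decomposition `μ = ∑_e α(e) δ_{A_e,B_e}`, where for the oriented edge
`(a,b)` (i.e. `G.Adj a b` with `dir a b = true`), `A_e` consists of those `s`
with `F_s` entirely in the component of `a` after deleting the edge, and `B_e`
of those with `F_s` entirely in the component of `b`. -/
theorem stmt_16 {V S : Type*} [Fintype V]
    (G : SimpleGraph V) (hG : G.IsTree)
    (dir : V → V → Bool) (hdir : ∀ u v, G.Adj u v → (dir u v = !dir v u))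
    (α : V → V → ℝ) (hα0 : ∀ u v, 0 ≤ α u v) (hαsymm : ∀ u v, α u v = α v u)
    (D : V → V → ℝ)
    (hD : ∀ (u v : V) (w : G.Walk u v), w.IsPath →
      D u v = (w.darts.map (fun d =>
        if dir d.toProd.1 d.toProd.2 then α d.toProd.1 d.toProd.2 else 0)).sum)
    (F : S → Set V)
    (hF : ∀ s, (F s).Nonempty ∧ (G.induce (F s)).Connected)
    (μ : S → S → ℝ)
    (hμ : ∀ s t, μ s t = sInf {x : ℝ | ∃ u ∈ F s, ∃ v ∈ F t, x = D u v}) :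
    ∀ s t : S, μ s t =
      ∑ a : V, ∑ b : V,
        if G.Adj a b ∧ dir a b = true ∧
            (∀ w ∈ F s, (G.deleteEdges {s(a, b)}).Reachable a w) ∧
            (∀ w ∈ F t, (G.deleteEdges {s(a, b)}).Reachable b w)
        then α a b else 0 := by
  classical
  intro s t
  obtain ⟨u0, hu0⟩ := (hF s).1
  obtain ⟨v0, hv0⟩ := (hF t).1
  set P : V → V → Prop := fun a b =>
    G.Adj a b ∧ dir a b = true ∧
      (∀ w ∈ F s, (G.deleteEdges {s(a, b)}).Reachable a w) ∧
      (∀ w ∈ F t, (G.deleteEdges {s(a, b)}).Reachable b w) with hPdef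
  -- every pair satisfying P gives a dart lying on any path from F s to F t
  have hdart : ∀ {u v : V}, u ∈ F s → v ∈ F t → ∀ (p : G.Walk u v), p.IsPath →
      ∀ a b (hPab : P a b), (⟨(a, b), hPab.1⟩ : G.Dart) ∈ p.darts := by
    intro u v hu hv p hp a b hPab
    have hadj : G.Adj a b := hPab.1
    have hau : (G.deleteEdges {s(a, b)}).Reachable a u := hPab.2.2.1 u hu
    have hbv : (G.deleteEdges {s(a, b)}).Reachable b v := hPab.2.2.2 v hv
    have hnr : ¬ (G.deleteEdges {s(a, b)}).Reachable u v := by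
      intro h
      exact stmt16_tree_not_reach hG hadj (hau.trans (h.trans hbv.symm))
    have hedge : s(a, b) ∈ p.edges := stmt16_cross p hnr
    obtain ⟨d, hd, hde⟩ := List.mem_map.mp hedge
    obtain ⟨⟨x, y⟩, hxy⟩ := d
    rcases SimpleGraph.dart_edge_eq_mk'_iff.mp hde with h1 | h1
    · obtain ⟨rfl, rfl⟩ := Prod.mk.injEq .. ▸ (Prod.ext_iff.mp h1)
      exact hd
    · exfalso
      obtain ⟨hx1, hy1⟩ := Prod.ext_iff.mp h1
      subst hx1
      subst hy1
      obtain ⟨hr1, hr2⟩ := stmt16_reach_of_dart p hp hd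
      have hde' : (Dart.mk (x, y) hxy).edge = s(y, x) := hde
      rw [hde'] at hr1
      exact stmt16_tree_not_reach hG hadj (hau.trans hr1)
  -- rewrite the double sum as a sum over darts of any such path
  have hsum : ∀ {u v : V}, u ∈ F s → v ∈ F t → ∀ (p : G.Walk u v), p.IsPath →
      (∑ a : V, ∑ b : V, if P a b then α a b else 0)
        = ∑ d ∈ p.darts.toFinset.filter (fun d => P d.toProd.1 d.toProd.2),
            (if dir d.toProd.1 d.toProd.2 then α d.toProd.1 d.toProd.2 else 0) := by
    intro u v hu hv p hp
    rw [← Fintype.sum_prod_type']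
    rw [show (∑ x : V × V, if P x.1 x.2 then α x.1 x.2 else 0)
        = ∑ x ∈ Finset.univ.filter (fun x : V × V => P x.1 x.2), α x.1 x.2 by
      rw [Finset.sum_filter]]
    refine Finset.sum_bij
      (fun x hx => (⟨x, ((Finset.mem_filter.mp hx).2).1⟩ : G.Dart)) ?_ ?_ ?_ ?_
    · intro x hx
      have hPx := (Finset.mem_filter.mp hx).2
      rw [Finset.mem_filter, List.mem_toFinset]
      exact ⟨hdart hu hv p hp x.1 x.2 hPx, hPx⟩
    · intro x hx y hy hxy
      have := congrArg Dart.toProd hxy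
      simpa using this
    · intro d hd
      have hPd := (Finset.mem_filter.mp hd).2
      refine ⟨d.toProd, Finset.mem_filter.mpr ⟨Finset.mem_univ _, hPd⟩, ?_⟩
      exact SimpleGraph.Dart.ext _ _ rfl
    · intro x hx
      have hPx := (Finset.mem_filter.mp hx).2
      simp only [hPx.2.1, if_true]
  have hdartsnodup : ∀ {u v : V} (p : G.Walk u v), p.IsPath → p.darts.Nodup :=
    fun p hp => Walk.darts_nodup_of_support_nodup hp.support_nodup
  -- lower bound
  have lb : ∀ u ∈ F s, ∀ v ∈ F t,
      (∑ a : V, ∑ b : V, if P a b then α a b else 0) ≤ D u v := by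
    intro u hu v hv
    obtain ⟨p, hp, -⟩ := hG.isConnected.exists_path_of_dist u v
    rw [hD u v p hp, hsum hu hv p hp,
      ← List.sum_toFinset _ (hdartsnodup p hp)]
    refine Finset.sum_le_sum_of_subset_of_nonneg (Finset.filter_subset _ _) ?_
    intro d _ _
    split
    · exact hα0 _ _
    · exact le_refl 0
  -- choose a closest pair
  obtain ⟨⟨u, v⟩, huv, hmin⟩ := Finset.exists_min_image
      (((F s).toFinite.toFinset) ×ˢ ((F t).toFinite.toFinset))
      (fun x => G.dist x.1 x.2)
      ⟨(u0, v0), by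
        simp only [Finset.mem_product, Set.Finite.mem_toFinset]
        exact ⟨hu0, hv0⟩⟩
  rw [Finset.mem_product, Set.Finite.mem_toFinset, Set.Finite.mem_toFinset] at huv
  obtain ⟨hu, hv⟩ := huv
  obtain ⟨p, hp, hlen⟩ := hG.isConnected.exists_path_of_dist u v
  have honlyu : ∀ x, x ∈ p.support → x ∈ F s → x = u := by
    intro x hx hxF
    by_contra hne
    obtain ⟨q, r, hqr⟩ := Walk.mem_support_iff_exists_append.mp hx
    have h1 : G.dist x v ≤ r.length := SimpleGraph.dist_le r
    have h2 : 1 ≤ q.length := by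
      rcases Nat.eq_zero_or_pos q.length with h0 | h0
      · exact absurd (Walk.eq_of_length_eq_zero h0) (fun h => hne h.symm)
      · exact h0
    have h3 : G.dist u v ≤ G.dist x v := hmin (x, v)
      (by
        simp only [Finset.mem_product, Set.Finite.mem_toFinset]
        exact ⟨hxF, hv⟩)
    have h4 : p.length = q.length + r.length := by rw [hqr, Walk.length_append]
    omega
  have honlyv : ∀ x, x ∈ p.support → x ∈ F t → x = v := by
    intro x hx hxF
    by_contra hne
    obtain ⟨q, r, hqr⟩ := Walk.mem_support_iff_exists_append.mp hx
    have h1 : G.dist u x ≤ q.length := SimpleGraph.dist_le q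
    have h2 : 1 ≤ r.length := by
      rcases Nat.eq_zero_or_pos r.length with h0 | h0
      · exact absurd (Walk.eq_of_length_eq_zero h0) hne
      · exact h0
    have h3 : G.dist u v ≤ G.dist u x := hmin (u, x)
      (by
        simp only [Finset.mem_product, Set.Finite.mem_toFinset]
        exact ⟨hu, hxF⟩)
    have h4 : p.length = q.length + r.length := by rw [hqr, Walk.length_append]
    omega
  -- walks inside the subtrees
  have hwalkF : ∀ (s' : S) (x y : V), x ∈ F s' → y ∈ F s' →
      ∃ q : G.Walk x y, ∀ z ∈ q.support, z ∈ F s' := by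
    intro s' x y hx hy
    obtain ⟨q0⟩ := (hF s').2 ⟨x, hx⟩ ⟨y, hy⟩
    refine ⟨q0.map (SimpleGraph.Embedding.induce (F s')).toHom, ?_⟩
    intro z hz
    have hz : z ∈ (q0.map (SimpleGraph.Embedding.induce (F s')).toHom).support := hz
    rw [Walk.support_map, List.mem_map] at hz
    obtain ⟨⟨z', hz'⟩, -, rfl⟩ := hz
    exact hz'
  -- every forward dart of the minimal path satisfies P
  have hPdart : ∀ d ∈ p.darts, dir d.toProd.1 d.toProd.2 = true →
      P d.toProd.1 d.toProd.2 := by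
    intro d hd hdir2
    obtain ⟨hr1, hr2⟩ := stmt16_reach_of_dart p hp hd
    have hedge : d.edge = s(d.toProd.1, d.toProd.2) := rfl
    rw [hedge] at hr1 hr2
    have hbu : d.toProd.2 ≠ u := by
      intro h
      apply stmt16_tree_not_reach hG d.adj
      rw [← h] at hr1
      exact hr1.symm
    have hav : d.toProd.1 ≠ v := by
      intro h
      apply stmt16_tree_not_reach hG d.adj
      rw [← h] at hr2
      exact hr2.symm
    refine ⟨d.adj, hdir2, ?_, ?_⟩
    · intro w hw
      obtain ⟨q, hq⟩ := hwalkF s u w hu hw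
      have hq' : s(d.toProd.1, d.toProd.2) ∉ q.edges := by
        intro hmem
        have h2 : d.toProd.2 ∈ q.support := q.snd_mem_support_of_mem_edges hmem
        have h3 : d.toProd.2 ∈ p.support :=
          Walk.dart_snd_mem_support_of_mem_darts _ hd
        exact hbu (honlyu _ h3 (hq _ h2))
      refine Reachable.trans hr1.symm ⟨q.toDeleteEdges _ ?_⟩
      intro e' he' hmem
      rw [Set.mem_singleton_iff] at hmem
      subst hmem
      exact hq' he'
    · intro w hw
      obtain ⟨q, hq⟩ := hwalkF t v w hv hw
      have hq' : s(d.toProd.1, d.toProd.2) ∉ q.edges := by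
        intro hmem
        have h2 : d.toProd.1 ∈ q.support := q.fst_mem_support_of_mem_edges hmem
        have h3 : d.toProd.1 ∈ p.support :=
          Walk.dart_fst_mem_support_of_mem_darts _ hd
        exact hav (honlyv _ h3 (hq _ h2))
      refine Reachable.trans hr2 ⟨q.toDeleteEdges _ ?_⟩
      intro e' he' hmem
      rw [Set.mem_singleton_iff] at hmem
      subst hmem
      exact hq' he'
  -- the value at the minimal pair equals the double sum
  have hDuv : D u v = ∑ a : V, ∑ b : V, if P a b then α a b else 0 := by
    have hfilter : p.darts.toFinset.filter (fun d => P d.toProd.1 d.toProd.2)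
        = p.darts.toFinset.filter (fun d => dir d.toProd.1 d.toProd.2 = true) := by
      apply Finset.filter_congr
      intro d hd
      rw [List.mem_toFinset] at hd
      exact ⟨fun h => h.2.1, fun h => hPdart d hd h⟩
    rw [hD u v p hp, hsum hu hv p hp, hfilter,
      ← List.sum_toFinset _ (hdartsnodup p hp)]
    rw [Finset.sum_filter]
    apply Finset.sum_congr rfl
    intro d _
    by_cases h : dir d.toProd.1 d.toProd.2 = true
    · simp [h]
    · simp [h]
  rw [hμ]
  apply le_antisymm
  · exact csInf_le
      ⟨∑ a : V, ∑ b : V, if P a b then α a b else 0, by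
        rintro x ⟨u', hu', v', hv', rfl⟩
        exact lb u' hu' v' hv'⟩
      ⟨u, hu, v, hv, hDuv.symm⟩
  · refine le_csInf ⟨D u v, u, hu, v, hv, rfl⟩ ?_
    rintro x ⟨u', hu', v', hv', rfl⟩
    exact lb u' hu' v' hv'
end

section
/- Let d be a directed metric in 𝒟_{μ,S} = { directed metrics d on S : d(s,t) ≥ μ(s,t) for all s,t }. Define the equivalence relation x ∼ y iff d(x,y)=d(y,x)=0, and call an edge st extremal if there is no pair (u,v) outside the equivalence class of (s,t) with d(u,v) = d(u,s) + d(s,t) + d(t,v). Then d is minimal in 𝒟_{μ,S} (no d' ∈ 𝒟_{μ,S} with d' ≤ d, d' ≠ d) if and only if every extremal class [st] contains a pair (u,v) with d(u,v) = μ(u,v). -/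
/-- a directed metric `d ≥ μ` is minimal in `𝒟_{μ,S}` iff every
extremal class contains a pair `(u,v)` with `d(u,v) = μ(u,v)`.  Here
`x ∼ y ↔ d(x,y)=d(y,x)=0`, the class of `(s,t)` is `{(u,v) : u∼s, v∼t}`, and
`(s,t)` is extremal iff no pair `(u,v)` outside its class with `u ≠ v`
satisfies `d(u,v) = d(u,s)+d(s,t)+d(t,v)`. -/
theorem stmt_17 {S : Type*} [Fintype S]
    (μ : S → S → ℝ) (hμ0 : ∀ s t, 0 ≤ μ s t) (hμdiag : ∀ s, μ s s = 0)
    (d : S → S → ℝ) (hd0 : ∀ s t, 0 ≤ d s t) (hddiag : ∀ s, d s s = 0)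
    (hdtri : ∀ s t u, d s u ≤ d s t + d t u)
    (hdμ : ∀ s t, μ s t ≤ d s t) :
    letI sim : S → S → Prop := fun x y => d x y = 0 ∧ d y x = 0
    letI extremal : S → S → Prop := fun s t =>
      ¬ ∃ u v : S, u ≠ v ∧ ¬ (sim u s ∧ sim v t) ∧
        d u v = d u s + d s t + d t v
    ((¬ ∃ d' : S → S → ℝ, (∀ s t, 0 ≤ d' s t) ∧ (∀ s, d' s s = 0) ∧
        (∀ s t u, d' s u ≤ d' s t + d' t u) ∧ (∀ s t, μ s t ≤ d' s t) ∧
        (∀ s t, d' s t ≤ d s t) ∧ d' ≠ d)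
      ↔ (∀ s t : S, extremal s t →
          ∃ u v : S, sim u s ∧ sim v t ∧ d u v = μ u v)) := by
  classical
  constructor
  · -- minimal → every extremal class has a contact pair
    intro hmin s t hext
    by_contra hcon
    push_neg at hcon
    have hsimss : (d s s = 0 ∧ d s s = 0) := ⟨hddiag s, hddiag s⟩
    have hsimtt : (d t t = 0 ∧ d t t = 0) := ⟨hddiag t, hddiag t⟩
    have hst0 : 0 < d s t := by
      rcases lt_or_eq_of_le (hd0 s t) with h | h
      · exact h
      · exfalso
        apply hcon s t hsimss hsimtt
        have := hdμ s t
        have := hμ0 s t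
        linarith
    -- the class of (s,t) is d-constant
    have hconst : ∀ u v, (d u s = 0 ∧ d s u = 0) → (d v t = 0 ∧ d t v = 0) → d u v = d s t := by
      intro u v hu hv
      obtain ⟨hus, hsu⟩ := hu
      obtain ⟨hvt, htv⟩ := hv
      have h1 := hdtri u s v
      have h2 := hdtri s t v
      have h3 := hdtri s u t
      have h4 := hdtri u v t
      linarith
    -- strict inequalities from extremality
    have hstr2 : ∀ c, ¬ (d c t = 0 ∧ d t c = 0) → d s c < d s t + d t c := by
      intro c hc
      rcases lt_or_eq_of_le (hdtri s t c) with h | h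
      · exact h
      · exfalso
        by_cases hsc : s = c
        · subst hsc
          have := hd0 t s
          have := hddiag s
          linarith
        · exact hext ⟨s, c, hsc, fun hh => hc hh.2, by rw [hddiag s]; linarith⟩
    have hstr3 : ∀ a, ¬ (d a s = 0 ∧ d s a = 0) → d a t < d a s + d s t := by
      intro a ha
      rcases lt_or_eq_of_le (hdtri a s t) with h | h
      · exact h
      · exfalso
        by_cases hat : a = t
        · subst hat
          have := hd0 a s
          have := hddiag a
          linarith
        · exact hext ⟨a, t, hat, fun hh => ha hh.1, by rw [hddiag t]; linarith⟩
    -- pointwise positive slack function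
    have hFpos : ∀ u v : S, 0 <
        min (if (d u s = 0 ∧ d s u = 0) ∧ (d v t = 0 ∧ d t v = 0) then d u v - μ u v else d s t)
          (min (if (d v t = 0 ∧ d t v = 0) then d s t else d s t + d t v - d s v)
            (if (d u s = 0 ∧ d s u = 0) then d s t else d u s + d s t - d u t)) := by
      intro u v
      refine lt_min ?_ (lt_min ?_ ?_)
      · split_ifs with h
        · have hne := hcon u v h.1 h.2
          have := hdμ u v
          rcases lt_or_eq_of_le this with h' | h'
          · linarith
          · exact absurd h'.symm hne
        · exact hst0
      · split_ifs with h
        · exact hst0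
        · linarith [hstr2 v h]
      · split_ifs with h
        · exact hst0
        · linarith [hstr3 u h]
    obtain ⟨q0, -, hq0⟩ := Finset.exists_min_image (Finset.univ : Finset (S × S))
      (fun q => min (if (d q.1 s = 0 ∧ d s q.1 = 0) ∧ (d q.2 t = 0 ∧ d t q.2 = 0) then d q.1 q.2 - μ q.1 q.2 else d s t)
        (min (if (d q.2 t = 0 ∧ d t q.2 = 0) then d s t else d s t + d t q.2 - d s q.2)
          (if (d q.1 s = 0 ∧ d s q.1 = 0) then d s t else d q.1 s + d s t - d q.1 t)))
      ⟨(s, s), Finset.mem_univ _⟩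
    set ε : ℝ := min (if (d q0.1 s = 0 ∧ d s q0.1 = 0) ∧ (d q0.2 t = 0 ∧ d t q0.2 = 0) then d q0.1 q0.2 - μ q0.1 q0.2 else d s t)
        (min (if (d q0.2 t = 0 ∧ d t q0.2 = 0) then d s t else d s t + d t q0.2 - d s q0.2)
          (if (d q0.1 s = 0 ∧ d s q0.1 = 0) then d s t else d q0.1 s + d s t - d q0.1 t)) with hεdef
    have hεpos : 0 < ε := hFpos q0.1 q0.2
    have key : ∀ u v : S, ε ≤
        min (if (d u s = 0 ∧ d s u = 0) ∧ (d v t = 0 ∧ d t v = 0) then d u v - μ u v else d s t)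
          (min (if (d v t = 0 ∧ d t v = 0) then d s t else d s t + d t v - d s v)
            (if (d u s = 0 ∧ d s u = 0) then d s t else d u s + d s t - d u t)) := by
      intro u v
      exact hq0 (u, v) (Finset.mem_univ _)
    have hε1 : ∀ u v, (d u s = 0 ∧ d s u = 0) → (d v t = 0 ∧ d t v = 0) → ε ≤ d u v - μ u v := by
      intro u v hu hv
      have h := (key u v).trans (min_le_left _ _)
      rwa [if_pos (⟨hu, hv⟩ : (d u s = 0 ∧ d s u = 0) ∧ (d v t = 0 ∧ d t v = 0))] at h
    have hε2 : ∀ c, ¬ (d c t = 0 ∧ d t c = 0) → ε ≤ d s t + d t c - d s c := by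
      intro c hc
      have h := (key s c).trans ((min_le_right _ _).trans (min_le_left _ _))
      rwa [if_neg hc] at h
    have hε3 : ∀ a, ¬ (d a s = 0 ∧ d s a = 0) → ε ≤ d a s + d s t - d a t := by
      intro a ha
      have h := (key a t).trans ((min_le_right _ _).trans (min_le_right _ _))
      rwa [if_neg ha] at h
    have hnb : ∀ b, ¬ ((d b s = 0 ∧ d s b = 0) ∧ (d b t = 0 ∧ d t b = 0)) := by
      rintro b ⟨⟨hbs, hsb⟩, ⟨hbt, htb⟩⟩
      have := hdtri s b t
      linarith
    refine hmin ⟨fun u v => if (d u s = 0 ∧ d s u = 0) ∧ (d v t = 0 ∧ d t v = 0) then d u v - ε else d u v,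
      ?_, ?_, ?_, ?_, ?_, ?_⟩
    · intro u v
      dsimp only
      split_ifs with h
      · have := hε1 u v h.1 h.2
        have := hμ0 u v
        linarith
      · exact hd0 u v
    · intro w
      dsimp only
      rw [if_neg (hnb w)]
      exact hddiag w
    · intro a b c
      dsimp only
      by_cases hab : (d a s = 0 ∧ d s a = 0) ∧ (d b t = 0 ∧ d t b = 0)
      · by_cases hbc : (d b s = 0 ∧ d s b = 0) ∧ (d c t = 0 ∧ d t c = 0)
        · exact absurd ⟨hbc.1, hab.2⟩ (hnb b)
        · rw [if_pos hab, if_neg hbc]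
          by_cases hac : (d a s = 0 ∧ d s a = 0) ∧ (d c t = 0 ∧ d t c = 0)
          · rw [if_pos hac]
            linarith [hdtri a b c]
          · rw [if_neg hac]
            have hct : ¬ (d c t = 0 ∧ d t c = 0) := fun h => hac ⟨hab.1, h⟩
            have e1 := hconst a b hab.1 hab.2
            have e2 := hdtri a s c
            have e3 := hdtri t b c
            have e4 := hε2 c hct
            obtain ⟨has, hsa⟩ := hab.1
            obtain ⟨hbt, htb⟩ := hab.2
            linarith
      · by_cases hbc : (d b s = 0 ∧ d s b = 0) ∧ (d c t = 0 ∧ d t c = 0)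
        · rw [if_neg hab, if_pos hbc]
          by_cases hac : (d a s = 0 ∧ d s a = 0) ∧ (d c t = 0 ∧ d t c = 0)
          · rw [if_pos hac]
            linarith [hdtri a b c]
          · rw [if_neg hac]
            have has' : ¬ (d a s = 0 ∧ d s a = 0) := fun h => hac ⟨h, hbc.2⟩
            have e1 := hconst b c hbc.1 hbc.2
            have e2 := hdtri a t c
            have e3 := hdtri a b s
            have e4 := hε3 a has'
            obtain ⟨hbs, hsb⟩ := hbc.1
            obtain ⟨hct, htc⟩ := hbc.2
            linarith
        · rw [if_neg hab, if_neg hbc]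
          by_cases hac : (d a s = 0 ∧ d s a = 0) ∧ (d c t = 0 ∧ d t c = 0)
          · rw [if_pos hac]
            linarith [hdtri a b c]
          · rw [if_neg hac]
            exact hdtri a b c
    · intro u v
      dsimp only
      split_ifs with h
      · have := hε1 u v h.1 h.2
        linarith
      · exact hdμ u v
    · intro u v
      dsimp only
      split_ifs with h
      · linarith
      · exact le_refl _
    · intro h
      have h2' := congrFun (congrFun h s) t
      rw [if_pos (⟨hsimss, hsimtt⟩ : (d s s = 0 ∧ d s s = 0) ∧ (d t t = 0 ∧ d t t = 0))] at h2'
      linarith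
  · -- contact pairs in extremal classes → minimal
    intro hco
    rintro ⟨d', h0', hdiag', htri', hμ', hle', hne'⟩
    have hex : ∃ p : S × S, d' p.1 p.2 < d p.1 p.2 := by
      by_contra h
      push_neg at h
      exact hne' (funext fun u => funext fun v => le_antisymm (hle' u v) (h (u, v)))
    set T : Finset (S × S) := Finset.univ.filter (fun p => d' p.1 p.2 < d p.1 p.2) with hTdef
    have hTne : T.Nonempty := ⟨hex.choose, by simp [hTdef, hex.choose_spec]⟩
    obtain ⟨p₁, hp₁, hp₁max⟩ := T.exists_max_image (fun p => d p.1 p.2) hTne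
    set T₂ : Finset (S × S) := T.filter (fun q => d q.1 q.2 = d p₁.1 p₁.2) with hT₂def
    obtain ⟨⟨s, t⟩, hpT₂, hpmin⟩ := T₂.exists_min_image
      (fun p => (∑ w, d p.1 w) + (∑ w, d w p.2)) ⟨p₁, by simp [hT₂def, hp₁]⟩
    have hstT : (s, t) ∈ T ∧ d s t = d p₁.1 p₁.2 := by
      have := hpT₂
      rw [hT₂def, Finset.mem_filter] at this
      exact this
    have hst : d' s t < d s t := by
      have := hstT.1
      rw [hTdef, Finset.mem_filter] at this
      exact this.2
    have hmaxd : ∀ q ∈ T, d q.1 q.2 ≤ d s t := by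
      intro q hq
      calc d q.1 q.2 ≤ d p₁.1 p₁.2 := hp₁max q hq
        _ = d s t := hstT.2.symm
    have hext : ¬ ∃ u v : S, u ≠ v ∧ ¬ ((d u s = 0 ∧ d s u = 0) ∧ (d v t = 0 ∧ d t v = 0)) ∧ d u v = d u s + d s t + d t v := by
      rintro ⟨u, v, huv, hnsim, heq⟩
      have hlt : d' u v < d u v := by
        have t1 := htri' u s v
        have t2 := htri' s t v
        have t3 := hle' u s
        have t4 := hle' t v
        linarith
      have hmem : (u, v) ∈ T := by
        rw [hTdef, Finset.mem_filter]
        exact ⟨Finset.mem_univ _, hlt⟩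
      have hle2 : d u v ≤ d s t := hmaxd (u, v) hmem
      have hus : d u s = 0 := by
        have := hd0 u s; have := hd0 t v; linarith
      have htv : d t v = 0 := by
        have := hd0 u s; have := hd0 t v; linarith
      have hduv : d u v = d s t := by linarith
      have hmem2 : (u, v) ∈ T₂ := by
        rw [hT₂def, Finset.mem_filter]
        exact ⟨hmem, hduv.trans hstT.2⟩
      have hψ := hpmin (u, v) hmem2
      dsimp only at hψ
      have hb1 : ∀ w, d u w ≤ d s w := by
        intro w
        have := hdtri u s w
        linarith
      have hb2 : ∀ w, d w v ≤ d w t := by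
        intro w
        have := hdtri w t v
        linarith
      have hcases : d s u ≠ 0 ∨ d v t ≠ 0 := by
        by_contra hcc
        push_neg at hcc
        exact hnsim ⟨⟨hus, hcc.1⟩, ⟨hcc.2, htv⟩⟩
      rcases hcases with hc | hc
      · have hsu : 0 < d s u := lt_of_le_of_ne (hd0 s u) (Ne.symm hc)
        have hlt1 : (∑ w, d u w) < ∑ w, d s w :=
          Finset.sum_lt_sum (fun w _ => hb1 w)
            ⟨u, Finset.mem_univ u, by rw [hddiag u]; exact hsu⟩
        have hle1 : (∑ w, d w v) ≤ ∑ w, d w t :=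
          Finset.sum_le_sum (fun w _ => hb2 w)
        linarith
      · have hvt : 0 < d v t := lt_of_le_of_ne (hd0 v t) (Ne.symm hc)
        have hlt1 : (∑ w, d w v) < ∑ w, d w t :=
          Finset.sum_lt_sum (fun w _ => hb2 w)
            ⟨v, Finset.mem_univ v, by rw [hddiag v]; exact hvt⟩
        have hle1 : (∑ w, d u w) ≤ ∑ w, d s w :=
          Finset.sum_le_sum (fun w _ => hb1 w)
        linarith
    obtain ⟨u, v, husim, hvsim, hμeq⟩ := hco s t hext
    obtain ⟨hus, hsu⟩ := husim
    obtain ⟨hvt, htv⟩ := hvsim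
    have hduv : d u v = d s t := by
      have h1 := hdtri u s v
      have h2 := hdtri s t v
      have h3 := hdtri s u t
      have h4 := hdtri u v t
      linarith
    have hlt : d' u v < d u v := by
      have t1 := htri' u s v
      have t2 := htri' s t v
      have t3 := hle' u s
      have t4 := hle' t v
      linarith
    have := hμ' u v
    linarith
end

section
/- Let μ be a directed metric on a finite set S, and for s ∈ S let μ_s ∈ R^{S^c ∪ S^r} be defined by μ_s(t^c) = μ(t,s), μ_s(t^r) = μ(s,t). Then (T_μ)_s = {μ_s}: any minimal nonnegative point p of P_μ satisfying p(s^c) = p(s^r) = 0 equals μ_s. -/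
/-- for a directed metric μ, `(T_μ)_s = {μ_s}`: any coordinatewise
minimal nonnegative point `p` of `P_μ` with `p(s^c) = p(s^r) = 0` equals
`μ_s`, where `μ_s(t^c) = μ(t,s)` and `μ_s(t^r) = μ(s,t)`. -/
theorem stmt_18 {S : Type*} [Fintype S]
    (μ : S → S → ℝ) (hμ0 : ∀ s t, 0 ≤ μ s t) (hμdiag : ∀ s, μ s s = 0)
    (hμtri : ∀ s t u, μ s u ≤ μ s t + μ t u)
    (s : S) (p : S ⊕ S → ℝ) (hp0 : ∀ u, 0 ≤ p u)
    (hp : ∀ t u : S, μ t u ≤ p (Sum.inl t) + p (Sum.inr u))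
    (hpmin : ¬ ∃ q : S ⊕ S → ℝ, (∀ u, 0 ≤ q u) ∧
      (∀ t u : S, μ t u ≤ q (Sum.inl t) + q (Sum.inr u)) ∧ q ≤ p ∧ q ≠ p)
    (hps : p (Sum.inl s) = 0 ∧ p (Sum.inr s) = 0) :
    p = Sum.elim (fun t => μ t s) (fun t => μ s t) := by
  set q : S ⊕ S → ℝ := Sum.elim (fun t => μ t s) (fun t => μ s t) with hq
  by_contra hne
  apply hpmin
  refine ⟨q, ?_, ?_, ?_, fun h => hne h.symm⟩
  · rintro (t | t) <;> exact hμ0 _ _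
  · intro t u
    calc μ t u ≤ μ t s + μ s u := hμtri t s u
    _ = q (Sum.inl t) + q (Sum.inr u) := by simp [hq]
  · rintro (t | t)
    · have := hp t s; simpa [hps.2, hq] using this
    · have := hp s t; simpa [hps.1, hq] using this
end
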